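/- arXiv:2501.08371 — 3 statements merged into one kernel-verified Lean document; each statement's English description precedes it below -/
import Mathlib

section
/- Let (Ω, μ) be a probability space, let I be a countable index set, let (E_i)_{i∈I} be a family of measurable events with ∑_{i∈I} μ(E_i) < ∞, and let D be a symmetric relation on I such that for every finite subset J ⊆ I whose elements are pairwise D-related, the events (E_i)_{i∈J} are mutually independent. Then for every integer κ ≥ 1, μ({ω ∈ Ω : there exists J ⊆ I with |J| = κ, elements of J pairwise D-related, and ω ∈ E_i for all i ∈ J}) ≤ ∑_{J ⊆ I, |J|=κ, pairwise D-related} μ(⋂_{i∈J} E_i) ≤ (∑_{i∈I} μ(E_i))^κ / κ!. -/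
open MeasureTheory
open scoped ENNReal Nat


lemma tsum_pow_eq {I : Type*} [Countable I] (a : I → ℝ≥0∞) (n : ℕ) :
    (∑' i, a i) ^ n = ∑' f : Fin n → I, ∏ k, a (f k) := by
  induction n with
  | zero =>
      have h : (∑' f : Fin 0 → I, ∏ k, a (f k)) = ∏ k : Fin 0, a (Fin.elim0 k) :=
        tsum_eq_single _ (fun f hf => absurd (Subsingleton.elim f _) hf)
      simp at h
      simp [h]
  | succ n ih =>
      rw [pow_succ, ih]
      calc (∑' f : Fin n → I, ∏ k, a (f k)) * (∑' i, a i)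
          = ∑' f : Fin n → I, ∑' i, (∏ k, a (f k)) * a i := by
            rw [← ENNReal.tsum_mul_right]
            exact tsum_congr fun f => (ENNReal.tsum_mul_left).symm
        _ = ∑' p : (Fin n → I) × I, (∏ k, a (p.1 k)) * a p.2 := by
            rw [ENNReal.tsum_prod']
        _ = ∑' f : Fin (n+1) → I, ∏ k, a (f k) := by
            rw [← Equiv.tsum_eq ((Equiv.prodComm (Fin n → I) I).trans
              (Fin.consEquiv fun _ => I)) (fun f => ∏ k, a (f k))]
            refine tsum_congr fun p => ?_
            show _ = ∏ k : Fin (n+1), a ((Fin.cons p.2 p.1 : Fin (n+1) → I) k)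
            rw [Fin.prod_univ_succ]; simp [mul_comm]

lemma fact_mul_tsum_le {I : Type*} [Countable I] (a : I → ℝ≥0∞) (κ : ℕ)
    (P : Finset I → Prop) :
    (κ ! : ℝ≥0∞) * ∑' J : {J : Finset I // J.card = κ ∧ P J}, ∏ i ∈ (J : Finset I), a i
      ≤ (∑' i, a i) ^ κ := by
  classical
  rw [tsum_pow_eq]
  set T := {J : Finset I // J.card = κ ∧ P J} with hT
  set Φ : T × Equiv.Perm (Fin κ) → (Fin κ → I) :=
    fun p k => ((p.1.1.equivFin.symm (Fin.cast p.1.2.1.symm (p.2 k)) : p.1.1) : I) with hΦ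
  have himg : ∀ p : T × Equiv.Perm (Fin κ), Finset.image (Φ p) Finset.univ = p.1.1 := by
    rintro ⟨⟨J, hJc, hJP⟩, π⟩
    ext i
    simp only [Finset.mem_image, Finset.mem_univ, true_and, hΦ]
    constructor
    · rintro ⟨k, rfl⟩; exact Subtype.coe_prop _
    · intro hi
      refine ⟨π.symm (Fin.cast hJc (J.equivFin ⟨i, hi⟩)), ?_⟩
      simp
  have hinj : Function.Injective Φ := by
    rintro ⟨⟨J, hJ⟩, π⟩ ⟨⟨J', hJ'⟩, π'⟩ h
    have hJJ : J = J' := by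
      have := himg (⟨⟨J, hJ⟩, π⟩ : T × Equiv.Perm (Fin κ))
      rw [h, himg] at this
      exact this.symm
    subst hJJ
    simp only [Prod.mk.injEq, Subtype.mk.injEq, true_and]
    refine Equiv.ext fun k => ?_
    have hk := congrFun h k
    simp only [hΦ] at hk
    have h2 := J.equivFin.symm.injective (Subtype.coe_injective hk)
    exact Fin.cast_injective _ h2
  have hval : ∀ p : T × Equiv.Perm (Fin κ),
      (∏ i ∈ (p.1 : Finset I), a i) = ∏ k, a (Φ p k) := by
    rintro ⟨⟨J, hJc, hJP⟩, π⟩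
    have : ∏ k : Fin κ, a (Φ (⟨⟨J, hJc, hJP⟩, π⟩ : T × Equiv.Perm (Fin κ)) k)
        = ∏ j : J, a j := by
      exact Equiv.prod_comp (π.trans ((finCongr hJc.symm).trans J.equivFin.symm))
        (fun j : J => a j)
    rw [this]
    exact (Finset.prod_coe_sort J a).symm
  calc (κ ! : ℝ≥0∞) * ∑' J : T, ∏ i ∈ (J : Finset I), a i
      = ∑' J : T, ∑' _ : Equiv.Perm (Fin κ), ∏ i ∈ (J : Finset I), a i := by
        rw [← ENNReal.tsum_mul_left]
        refine tsum_congr fun J => ?_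
        rw [tsum_fintype, Finset.sum_const, Finset.card_univ, Fintype.card_perm,
          Fintype.card_fin, nsmul_eq_mul]
    _ = ∑' p : T × Equiv.Perm (Fin κ), ∏ k, a (Φ p k) := by
        rw [ENNReal.tsum_prod']
        exact tsum_congr fun J => tsum_congr fun π => hval ⟨J, π⟩
    _ ≤ ∑' f : Fin κ → I, ∏ k, a (f k) :=
        ENNReal.summable.tsum_le_tsum_of_inj Φ hinj (fun c _ => zero_le) (fun p => le_rfl)
          ENNReal.summable

/-- The disjointness lemma of Erdős--Tetali: if `(E_i)_{i∈I}` is a family of events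
with `∑ μ(E_i) < ∞` and `D` is a symmetric relation such that every finite
pairwise-`D`-related subfamily is mutually independent, then for every `κ ≥ 1` the
probability that some pairwise-`D`-related `J` of size `κ` has all its events
occurring is at most `∑_{J} μ(⋂_{i∈J} E_i) ≤ (∑_i μ(E_i))^κ / κ!`. -/
theorem disjointness_lemma {Ω : Type*} [MeasurableSpace Ω] (μ : Measure Ω)
    [IsProbabilityMeasure μ] {I : Type*} [Countable I]
    (E : I → Set Ω) (hE : ∀ i, MeasurableSet (E i))
    (hsum : ∑' i, μ (E i) ≠ ⊤)
    (D : I → I → Prop) (hD : Symmetric D)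
    (hind : ∀ J : Finset I, (∀ i ∈ J, ∀ j ∈ J, i ≠ j → D i j) →
      ∀ J' : Finset I, J' ⊆ J →
        μ (⋂ i ∈ J', E i) = ∏ i ∈ J', μ (E i)) :
    ∀ κ : ℕ, 1 ≤ κ →
      (μ {ω : Ω | ∃ J : Finset I, J.card = κ ∧
          (∀ i ∈ J, ∀ j ∈ J, i ≠ j → D i j) ∧ ∀ i ∈ J, ω ∈ E i}
        ≤ ∑' J : {J : Finset I // J.card = κ ∧ ∀ i ∈ J, ∀ j ∈ J, i ≠ j → D i j},
            μ (⋂ i ∈ (J : Finset I), E i)) ∧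
      ((∑' J : {J : Finset I // J.card = κ ∧ ∀ i ∈ J, ∀ j ∈ J, i ≠ j → D i j},
          μ (⋂ i ∈ (J : Finset I), E i))
        ≤ (∑' i, μ (E i)) ^ κ / (κ ! : ℝ≥0∞)) := by
  intro κ hκ
  constructor
  · refine (measure_mono ?_).trans (measure_iUnion_le _)
    rintro ω ⟨J, hc, hd, hm⟩
    exact Set.mem_iUnion.mpr ⟨⟨J, hc, hd⟩, by simpa [Set.mem_iInter] using hm⟩
  · have hrw : (∑' J : {J : Finset I // J.card = κ ∧ ∀ i ∈ J, ∀ j ∈ J, i ≠ j → D i j},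
        μ (⋂ i ∈ (J : Finset I), E i))
        = ∑' J : {J : Finset I // J.card = κ ∧ ∀ i ∈ J, ∀ j ∈ J, i ≠ j → D i j},
            ∏ i ∈ (J : Finset I), μ (E i) :=
      tsum_congr fun J => hind J.1 J.2.2 J.1 subset_rfl
    rw [hrw, ENNReal.le_div_iff_mul_le (Or.inl (by positivity))
      (Or.inl (ENNReal.natCast_ne_top _)), mul_comm]
    exact fact_mul_tsum_le (fun i => μ (E i)) κ _
end

section
/- Let ω > 0 be a real number. For every integer ℓ ≥ 2 there is a constant C(ℓ,ω) such that for all integers n ≥ 1, ∑ (x_1⋯x_ℓ)^{ω−1} = (Γ(ω)^ℓ/Γ(ℓω))·n^{ℓω−1} + O_{ℓ,ω}(n^{(ℓ−1)ω−1}), where the sum is over all ℓ-tuples (x_1,…,x_ℓ) of positive integers with x_1+⋯+x_ℓ = n. -/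
open Filter Finset Real
open scoped Topology
open intervalIntegral

noncomputable section


lemma one_le_two_rpow_abs (q : ℝ) : (1:ℝ) ≤ 2 ^ |q| := by
  have := Real.rpow_le_rpow_of_exponent_le (x := 2) (by norm_num) (abs_nonneg q)
  simpa using this

/-- Absorb finitely many initial values into the constant. -/
lemma absorb_small (g : ℕ → ℝ) (e : ℝ) (n₀ : ℕ) (K : ℝ)
    (H : ∀ n : ℕ, n₀ ≤ n → |g n| ≤ K * (n : ℝ) ^ e) :
    ∃ K' : ℝ, 0 < K' ∧ ∀ n : ℕ, 1 ≤ n → |g n| ≤ K' * (n : ℝ) ^ e := by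
  refine ⟨max K 0 + 1 + ∑ m ∈ Finset.Icc 1 n₀, |g m| / (m : ℝ) ^ e, by positivity, ?_⟩
  intro n hn
  have hnp : (0:ℝ) < (n:ℝ) ^ e := by
    apply Real.rpow_pos_of_pos; exact_mod_cast hn
  rcases le_or_gt n₀ n with h | h
  · calc |g n| ≤ K * (n:ℝ)^e := H n h
      _ ≤ _ := by
        apply mul_le_mul_of_nonneg_right _ hnp.le
        have : (0:ℝ) ≤ ∑ m ∈ Finset.Icc 1 n₀, |g m| / (m : ℝ) ^ e := by
          apply Finset.sum_nonneg; intro m hm; positivity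
        have := le_max_left K 0
        linarith
  · have hmem : n ∈ Finset.Icc 1 n₀ := by simp [hn, h.le]
    have h1 : |g n| / (n:ℝ)^e ≤ ∑ m ∈ Finset.Icc 1 n₀, |g m| / (m : ℝ) ^ e :=
      Finset.single_le_sum (f := fun m => |g m| / (m:ℝ)^e) (fun m _ => by positivity) hmem
    have h2 : |g n| = (|g n| / (n:ℝ)^e) * (n:ℝ)^e := by field_simp
    rw [h2]
    apply mul_le_mul_of_nonneg_right _ hnp.le
    have := le_max_right K 0
    linarith

/-- for `n/2 ≤ y ≤ n` : `y^q ≤ 2^|q| * n^q`. -/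
lemma rpow_mid_bound (q n y : ℝ) (hn : 0 < n) (h1 : n/2 ≤ y) (h2 : y ≤ n) :
    y ^ q ≤ 2 ^ |q| * n ^ q := by
  have hy : 0 < y := lt_of_lt_of_le (by linarith) h1
  have h2q : (1:ℝ) ≤ 2 ^ |q| := one_le_two_rpow_abs q
  have hnq : (0:ℝ) < n ^ q := Real.rpow_pos_of_pos hn q
  rcases le_or_gt 0 q with hq | hq
  · have : y ^ q ≤ n ^ q := Real.rpow_le_rpow hy.le h2 hq
    nlinarith
  · have hb : y ^ q ≤ (n/2) ^ q := Real.rpow_le_rpow_of_nonpos (by linarith) h1 hq.le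
    have hd : (n/2) ^ q = 2 ^ (-q) * n ^ q := by
      rw [Real.div_rpow hn.le (by norm_num), Real.rpow_neg (by norm_num)]
      ring
    have h2' : (2:ℝ) ^ (-q) ≤ 2 ^ |q| :=
      Real.rpow_le_rpow_of_exponent_le (by norm_num) (neg_le_abs q)
    calc y ^ q ≤ (n/2) ^ q := hb
      _ = 2 ^ (-q) * n ^ q := hd
      _ ≤ 2 ^ |q| * n ^ q := by nlinarith

/-- partial sums of powers: `∑_{x=1}^{n} x^(p) ≤ C n^(p+1)` for `p > -1`. -/
lemma sum_rpow_le (p : ℝ) (hp : -1 < p) :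
    ∃ C : ℝ, 0 < C ∧ ∀ n : ℕ, 1 ≤ n →
      ∑ x ∈ Finset.Icc 1 n, (x:ℝ) ^ p ≤ C * (n:ℝ) ^ (p+1) := by
  rcases le_or_gt 0 p with hp0 | hp0
  · refine ⟨1, one_pos, fun n hn => ?_⟩
    have : ∀ x ∈ Finset.Icc 1 n, (x:ℝ) ^ p ≤ (n:ℝ) ^ p := by
      intro x hx
      simp only [Finset.mem_Icc] at hx
      exact Real.rpow_le_rpow (by positivity) (by exact_mod_cast hx.2) hp0
    calc ∑ x ∈ Finset.Icc 1 n, (x:ℝ) ^ p ≤ ∑ x ∈ Finset.Icc 1 n, (n:ℝ) ^ p :=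
          Finset.sum_le_sum this
      _ = n * (n:ℝ)^p := by
          rw [Finset.sum_const, Nat.card_Icc]; simp [mul_comm]
      _ = (n:ℝ) ^ (p+1) := by
          rw [Real.rpow_add (by exact_mod_cast hn) , Real.rpow_one]; ring
      _ ≤ 1 * (n:ℝ) ^ (p+1) := by rw [one_mul]
  · -- p < 0 case : x^p ≤ ∫_{x-1}^{x} t^p dt for x ≥ 2
    have hp1 : (0:ℝ) < p + 1 := by linarith
    refine ⟨1 + 1/(p+1), by positivity, fun n hn => ?_⟩
    have key : ∀ x : ℕ, 2 ≤ x → (p+1) * (x:ℝ) ^ p ≤ (x:ℝ)^(p+1) - ((x:ℝ)-1)^(p+1) := by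
      intro x hx
      have hx1 : (1:ℝ) ≤ (x:ℝ) - 1 := by
        have : (2:ℝ) ≤ (x:ℝ) := by exact_mod_cast hx
        linarith
      have hint : ∫ t in ((x:ℝ)-1)..(x:ℝ), t ^ p
          = ((x:ℝ)^(p+1) - ((x:ℝ)-1)^(p+1))/(p+1) := by
        rw [integral_rpow (Or.inl hp)]
      have hmono : ∀ t ∈ Set.Icc ((x:ℝ)-1) (x:ℝ), (x:ℝ)^p ≤ t^p := by
        intro t ht
        exact Real.rpow_le_rpow_of_nonpos (by linarith [ht.1]) ht.2 hp0.le
      have hcont : ContinuousOn (fun t : ℝ => t ^ p) (Set.uIcc ((x:ℝ)-1) (x:ℝ)) := by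
        apply ContinuousOn.rpow_const continuousOn_id
        intro t ht
        rw [Set.uIcc_of_le (by linarith)] at ht
        refine Or.inl (fun h => ?_)
        simp only [id_eq] at h
        rw [h] at ht
        linarith [ht.1]
      have hIM := intervalIntegral.integral_mono_on (by linarith : (x:ℝ)-1 ≤ (x:ℝ))
        (intervalIntegrable_const (μ := MeasureTheory.volume)) (hcont.intervalIntegrable)
        (fun t ht => hmono t ht)
      simp only [intervalIntegral.integral_const, smul_eq_mul] at hIM
      rw [hint] at hIM
      have : (x:ℝ)^p ≤ ((x:ℝ)^(p+1) - ((x:ℝ)-1)^(p+1))/(p+1) := by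
        calc (x:ℝ)^p = ((x:ℝ) - ((x:ℝ)-1)) * (x:ℝ)^p := by ring_nf
          _ ≤ _ := hIM
      rw [le_div_iff₀ hp1] at this
      linarith
    -- telescoping by induction
    have main : ∀ n : ℕ, 1 ≤ n →
        (p+1) * ∑ x ∈ Finset.Icc 1 n, (x:ℝ) ^ p ≤ (p+1) + (n:ℝ)^(p+1) - 1 := by
      intro n hn
      induction n with
      | zero => omega
      | succ m ih =>
        rcases Nat.eq_or_lt_of_le hn with h | h
        · simp [← h, Real.rpow_natCast]
        · have hm : 1 ≤ m := by omega
          have step := key (m+1) (by omega)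
          have hsp : ∑ x ∈ Finset.Icc 1 (m+1), (x:ℝ) ^ p
              = (∑ x ∈ Finset.Icc 1 m, (x:ℝ) ^ p) + ((m+1:ℕ):ℝ)^p := by
            rw [← Finset.sum_Icc_succ_top (by omega)]
          rw [hsp]
          have ihm := ih hm
          push_cast at step ⊢
          rw [show (m:ℝ) + 1 - 1 = (m:ℝ) by ring] at step
          linarith
    have h1 : (1:ℝ) ≤ (n:ℝ)^(p+1) := by
      have hh : (1:ℝ) ≤ (n:ℝ) := by exact_mod_cast hn
      calc (1:ℝ) = (n:ℝ)^(0:ℝ) := by rw [Real.rpow_zero]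
        _ ≤ (n:ℝ)^(p+1) := Real.rpow_le_rpow_of_exponent_le hh (by linarith)
    have hmn := main n hn
    have hinv : (p+1) * (1/(p+1)) = 1 := by field_simp
    nlinarith [hmn, h1, hp1, hinv]


lemma sum_reflect_Ioo (n : ℕ) (f : ℕ → ℝ) :
    ∑ x ∈ Finset.Ioo 0 n, f (n - x) = ∑ x ∈ Finset.Ioo 0 n, f x := by
  apply Finset.sum_nbij' (fun x => n - x) (fun x => n - x)
  · intro a ha; simp only [Finset.mem_Ioo] at *; omega
  · intro a ha; simp only [Finset.mem_Ioo] at *; omega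
  · intro a ha; simp only [Finset.mem_Ioo] at ha; omega
  · intro a ha; simp only [Finset.mem_Ioo] at ha; omega
  · intro a ha; rfl

lemma conv_crude (a b : ℝ) (ha : 0 < a) (hb : 0 < b) :
    ∃ C : ℝ, 0 < C ∧ ∀ n : ℕ, 1 ≤ n →
      ∑ x ∈ Finset.Ioo 0 n, (x:ℝ) ^ (a-1) * ((n - x : ℕ):ℝ) ^ (b-1)
        ≤ C * (n:ℝ) ^ (a+b-1) := by
  obtain ⟨Ca, hCa, HCa⟩ := sum_rpow_le (a-1) (by linarith)
  obtain ⟨Cb, hCb, HCb⟩ := sum_rpow_le (b-1) (by linarith)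
  refine ⟨2^|b-1| * Ca + 2^|a-1| * Cb, by positivity, fun n hn => ?_⟩
  have hn0 : (0:ℝ) < n := by exact_mod_cast hn
  have hterm : ∀ x ∈ Finset.Ioo 0 n, (x:ℝ) ^ (a-1) * ((n - x : ℕ):ℝ) ^ (b-1)
      ≤ 2^|b-1| * (n:ℝ)^(b-1) * (x:ℝ)^(a-1)
        + 2^|a-1| * (n:ℝ)^(a-1) * ((n - x : ℕ):ℝ)^(b-1) := by
    intro x hx
    simp only [Finset.mem_Ioo] at hx
    have hx0 : (0:ℝ) < x := by exact_mod_cast hx.1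
    have hxn : (x:ℝ) ≤ n := by exact_mod_cast hx.2.le
    have hcast : ((n - x : ℕ):ℝ) = (n:ℝ) - x := by
      have : x ≤ n := hx.2.le
      push_cast [this]; ring
    have hy0 : (0:ℝ) < ((n - x : ℕ):ℝ) := by
      rw [hcast]
      have : (x:ℝ) < n := by exact_mod_cast hx.2
      linarith
    rcases le_or_gt ((n:ℝ)/2) ((n:ℝ) - x) with h | h
    · have h1 : ((n - x : ℕ):ℝ)^(b-1) ≤ 2^|b-1| * (n:ℝ)^(b-1) := by
        rw [hcast]; exact rpow_mid_bound _ _ _ hn0 h (by linarith)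
      have : (x:ℝ) ^ (a-1) * ((n - x : ℕ):ℝ) ^ (b-1) ≤ (x:ℝ)^(a-1) * (2^|b-1| * (n:ℝ)^(b-1)) := by
        apply mul_le_mul_of_nonneg_left h1 (by positivity)
      have h2 : (0:ℝ) ≤ 2^|a-1| * (n:ℝ)^(a-1) * ((n - x : ℕ):ℝ)^(b-1) := by positivity
      linarith [this]
    · have h1 : (x:ℝ)^(a-1) ≤ 2^|a-1| * (n:ℝ)^(a-1) :=
        rpow_mid_bound _ _ _ hn0 (by linarith) hxn
      have : (x:ℝ) ^ (a-1) * ((n - x : ℕ):ℝ) ^ (b-1)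
          ≤ (2^|a-1| * (n:ℝ)^(a-1)) * ((n - x : ℕ):ℝ)^(b-1) :=
        mul_le_mul_of_nonneg_right h1 (by positivity)
      have h2 : (0:ℝ) ≤ 2^|b-1| * (n:ℝ)^(b-1) * (x:ℝ)^(a-1) := by positivity
      linarith [this]
  have hsum := Finset.sum_le_sum hterm
  rw [Finset.sum_add_distrib] at hsum
  have hA : ∑ x ∈ Finset.Ioo 0 n, 2^|b-1| * (n:ℝ)^(b-1) * (x:ℝ)^(a-1)
      ≤ 2^|b-1| * (n:ℝ)^(b-1) * (Ca * (n:ℝ)^a) := by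
    rw [← Finset.mul_sum]
    apply mul_le_mul_of_nonneg_left _ (by positivity)
    calc ∑ x ∈ Finset.Ioo 0 n, (x:ℝ)^(a-1) ≤ ∑ x ∈ Finset.Icc 1 n, (x:ℝ)^(a-1) := by
          apply Finset.sum_le_sum_of_subset_of_nonneg
          · intro x hx; simp only [Finset.mem_Ioo, Finset.mem_Icc] at *; omega
          · intro x _ _; positivity
      _ ≤ Ca * (n:ℝ)^(a-1+1) := HCa n hn
      _ = Ca * (n:ℝ)^a := by norm_num
  have hB : ∑ x ∈ Finset.Ioo 0 n, 2^|a-1| * (n:ℝ)^(a-1) * ((n - x : ℕ):ℝ)^(b-1)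
      ≤ 2^|a-1| * (n:ℝ)^(a-1) * (Cb * (n:ℝ)^b) := by
    rw [← Finset.mul_sum]
    apply mul_le_mul_of_nonneg_left _ (by positivity)
    have := sum_reflect_Ioo n (fun y => (y:ℝ)^(b-1))
    calc ∑ x ∈ Finset.Ioo 0 n, ((n - x: ℕ):ℝ)^(b-1) = ∑ x ∈ Finset.Ioo 0 n, (x:ℝ)^(b-1) := this
      _ ≤ ∑ x ∈ Finset.Icc 1 n, (x:ℝ)^(b-1) := by
          apply Finset.sum_le_sum_of_subset_of_nonneg
          · intro x hx; simp only [Finset.mem_Ioo, Finset.mem_Icc] at *; omega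
          · intro x _ _; positivity
      _ ≤ Cb * (n:ℝ)^(b-1+1) := HCb n hn
      _ = Cb * (n:ℝ)^b := by norm_num
  have hpow1 : (n:ℝ)^(b-1) * (n:ℝ)^a = (n:ℝ)^(a+b-1) := by
    rw [← Real.rpow_add hn0]; ring_nf
  have hpow2 : (n:ℝ)^(a-1) * (n:ℝ)^b = (n:ℝ)^(a+b-1) := by
    rw [← Real.rpow_add hn0]; ring_nf
  calc ∑ x ∈ Finset.Ioo 0 n, (x:ℝ) ^ (a-1) * ((n - x : ℕ):ℝ) ^ (b-1) ≤ _ := hsum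
    _ ≤ 2^|b-1| * (n:ℝ)^(b-1) * (Ca * (n:ℝ)^a) + 2^|a-1| * (n:ℝ)^(a-1) * (Cb * (n:ℝ)^b) := by
        linarith
    _ = (2^|b-1| * Ca + 2^|a-1| * Cb) * (n:ℝ)^(a+b-1) := by
        rw [show (2^|b-1| * Ca + 2^|a-1| * Cb) * (n:ℝ)^(a+b-1)
          = 2^|b-1| * Ca * ((n:ℝ)^(b-1) * (n:ℝ)^a) + 2^|a-1| * Cb * ((n:ℝ)^(a-1) * (n:ℝ)^b)
          from by rw [hpow1, hpow2]; ring]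
        ring


/-- Euler-Maclaurin boundary coefficients. -/
def emc (j : ℕ) : ℝ := (-1)^(j+1) * bernoulliFun (j+1) 0 / (Nat.factorial (j+1) : ℝ)

/-- Euler-Maclaurin kernel. -/
def EB (k : ℕ) (s : ℝ) : ℝ := (-1)^(k+1) * bernoulliFun k s / (Nat.factorial k : ℝ)

lemma bernoulliFun_zero_eq (s : ℝ) : bernoulliFun 0 s = 1 := by
  simp [bernoulliFun, Polynomial.bernoulli_zero]

lemma hasDerivAt_bernoulliFun_shift (k : ℕ) (x t : ℝ) :
    HasDerivAt (fun t => bernoulliFun k (t - x)) ((k:ℝ) * bernoulliFun (k-1) (t - x)) t := by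
  have h1 := hasDerivAt_bernoulliFun k (t - x)
  have h2 : HasDerivAt (fun t : ℝ => t - x) 1 t := (hasDerivAt_id t).sub_const x
  have := h1.comp t h2
  rw [mul_one] at this
  exact this

lemma continuousOn_EB (k : ℕ) (x : ℝ) :
    ContinuousOn (fun t => EB k (t - x)) (Set.Icc x (x+1)) := by
  apply Continuous.continuousOn
  unfold EB bernoulliFun
  fun_prop

/-- Per-interval Euler–Maclaurin identity. -/
lemma per_interval (k : ℕ) (hk : 1 ≤ k) (x : ℝ) (F : ℕ → ℝ → ℝ)
    (hder : ∀ j < k, ∀ t ∈ Set.Icc x (x+1), HasDerivAt (F j) (F (j+1) t) t)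
    (hcont : ContinuousOn (F k) (Set.Icc x (x+1))) :
    F 0 (x+1) = (∫ t in x..(x+1), F 0 t)
      + ∑ j ∈ Finset.range k, emc j * (F j (x+1) - F j x)
      + ∫ t in x..(x+1), EB k (t - x) * F k t := by
  induction k with
  | zero => omega
  | succ k ih =>
    have hIcc : Set.uIcc x (x+1) = Set.Icc x (x+1) := Set.uIcc_of_le (by linarith)
    rcases Nat.eq_or_lt_of_le hk with h1 | h1
    · -- base case k = 1
      have hk0 : k = 0 := by omega
      subst hk0
      have hu : ∀ t ∈ Set.uIcc x (x+1),
          HasDerivAt (fun t => bernoulliFun 1 (t - x)) (1:ℝ) t := by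
        intro t _
        have := hasDerivAt_bernoulliFun_shift 1 x t
        simpa [bernoulliFun_zero_eq] using this
      have hv : ∀ t ∈ Set.uIcc x (x+1), HasDerivAt (F 0) (F 1 t) t := by
        intro t ht; exact hder 0 (by omega) t (hIcc ▸ ht)
      have hF1int : IntervalIntegrable (F 1) MeasureTheory.volume x (x+1) := by
        have : ContinuousOn (F 1) (Set.uIcc x (x+1)) := by rw [hIcc]; exact hcont
        exact this.intervalIntegrable
      have parts := integral_mul_deriv_eq_deriv_mul hu hv
        (intervalIntegrable_const) hF1int
      -- parts : ∫ B1(t-x) * F 1 t = B1(1) * F 0 (x+1) - B1(0) * F 0 x - ∫ 1 * F 0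
      have hB10 : bernoulliFun 1 0 = -(1/2) := by
        rw [bernoulliFun_eval_zero]
        norm_num [bernoulli_one]
      have hB11 : bernoulliFun 1 1 = 1/2 := by
        rw [bernoulliFun_eval_one, hB10]; norm_num
      have hemc0 : emc 0 = 1/2 := by
        simp [emc, hB10, Nat.factorial]
      have hEB1 : ∀ t : ℝ, EB 1 (t - x) = bernoulliFun 1 (t - x) := by
        intro t; simp [EB, Nat.factorial]
      rw [show x + 1 - x = (1:ℝ) by ring, sub_self] at parts
      have hre : (∫ t in x..(x+1), EB 1 (t - x) * F 1 t)
          = ∫ t in x..(x+1), bernoulliFun 1 (t - x) * F 1 t := by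
        apply intervalIntegral.integral_congr
        intro t _
        show EB 1 (t - x) * F 1 t = bernoulliFun 1 (t - x) * F 1 t
        rw [hEB1]
      have hone : (∫ t in x..(x+1), (1:ℝ) * F 0 t) = ∫ t in x..(x+1), F 0 t := by
        simp
      rw [hone] at parts
      simp only [zero_add, Finset.range_one, Finset.sum_singleton, hemc0]
      rw [hre, parts, hB11, hB10]
      ring
    · -- inductive step, k ≥ 1
      have hk1 : 1 ≤ k := by omega
      have ihk := ih hk1 (fun j hj => hder j (by omega)) ?contk
      case contk =>
        intro t ht
        exact ((hder k (by omega) t ht).continuousAt.continuousWithinAt)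
      -- now transform the remainder
      set u : ℝ → ℝ := fun t => (-1)^(k+1) * bernoulliFun (k+1) (t - x) / (Nat.factorial (k+1) : ℝ) with hu_def
      have hu : ∀ t ∈ Set.uIcc x (x+1), HasDerivAt u (EB k (t - x)) t := by
        intro t _
        have h1 := (hasDerivAt_bernoulliFun_shift (k+1) x t).const_mul ((-1:ℝ)^(k+1))
        have h2 := h1.div_const (Nat.factorial (k+1) : ℝ)
        refine h2.congr_deriv ?_
        simp only [Nat.add_sub_cancel, EB]
        rw [Nat.factorial_succ]
        have hkf : (Nat.factorial k : ℝ) ≠ 0 := by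
          exact_mod_cast Nat.factorial_ne_zero k
        push_cast
        field_simp
      have hv : ∀ t ∈ Set.uIcc x (x+1), HasDerivAt (F k) (F (k+1) t) t := by
        intro t ht; exact hder k (by omega) t (hIcc ▸ ht)
      have hEBcont : ContinuousOn (fun t => EB k (t - x)) (Set.uIcc x (x+1)) := by
        rw [hIcc]; exact continuousOn_EB k x
      have hFk1int : IntervalIntegrable (F (k+1)) MeasureTheory.volume x (x+1) := by
        have : ContinuousOn (F (k+1)) (Set.uIcc x (x+1)) := by rw [hIcc]; exact hcont
        exact this.intervalIntegrable
      have parts := integral_mul_deriv_eq_deriv_mul hu hv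
        (hEBcont.intervalIntegrable) hFk1int
      -- parts : ∫ u * F (k+1) = u(x+1) Fk(x+1) - u(x) Fk(x) - ∫ EB k (t-x) * F k t
      have hux1 : u (x+1) = emc k := by
        simp only [hu_def]
        rw [show x + 1 - x = (1:ℝ) by ring,
          bernoulliFun_endpoints_eq_of_ne_one (by omega : k + 1 ≠ 1)]
        rfl
      have hux : u x = emc k := by
        simp only [hu_def]
        rw [sub_self]
        rfl
      have hremainder : (∫ t in x..(x+1), EB k (t - x) * F k t)
          = emc k * (F k (x+1) - F k x) + ∫ t in x..(x+1), EB (k+1) (t - x) * F (k+1) t := by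
        have hneg : ∀ t : ℝ, EB (k+1) (t - x) = - u t := by
          intro t
          simp only [hu_def, EB]
          rw [pow_succ]
          ring
        have h2 : (∫ t in x..(x+1), EB (k+1) (t - x) * F (k+1) t)
            = - ∫ t in x..(x+1), u t * F (k+1) t := by
          rw [← intervalIntegral.integral_neg]
          apply intervalIntegral.integral_congr
          intro t _
          show EB (k+1) (t - x) * F (k+1) t = -(u t * F (k+1) t)
          rw [hneg t]; ring
        rw [h2, parts, hux1, hux]
        ring
      rw [ihk, hremainder]
      rw [Finset.sum_range_succ]
      ring

lemma cont_EB' (k : ℕ) (x : ℝ) : ContinuousOn (fun t => EB k (t - x)) (Set.uIcc x (x+1)) := by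
  rw [Set.uIcc_of_le (by linarith)]; exact continuousOn_EB k x

lemma EM_sum (k : ℕ) (hk : 1 ≤ k) (A : ℝ) (m : ℕ) (F : ℕ → ℝ → ℝ)
    (hder : ∀ j < k, ∀ t ∈ Set.Icc A (A + m), HasDerivAt (F j) (F (j+1) t) t)
    (hcont : ContinuousOn (F k) (Set.Icc A (A + m))) :
    ∑ i ∈ Finset.range m, F 0 (A + i + 1)
      = (∫ t in A..(A + m), F 0 t)
      + ∑ j ∈ Finset.range k, emc j * (F j (A + m) - F j A)
      + ∑ i ∈ Finset.range m, ∫ t in (A + i)..(A + i + 1), EB k (t - (A + i)) * F k t := by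
  induction m with
  | zero => simp
  | succ m ih =>
    have hm : (0:ℝ) ≤ m := by positivity
    have hsub : Set.Icc A (A + m) ⊆ Set.Icc A (A + (m+1:ℕ)) := by
      apply Set.Icc_subset_Icc_right; push_cast; linarith
    have hsub2 : Set.Icc (A + m) (A + m + 1) ⊆ Set.Icc A (A + (m+1:ℕ)) := by
      intro t ht; constructor
      · linarith [ht.1]
      · push_cast; linarith [ht.2]
    have ihm := ih (fun j hj t ht => hder j hj t (hsub ht)) (hcont.mono hsub)
    have hPI := per_interval k hk (A + m) F
      (fun j hj t ht => hder j hj t (hsub2 ht)) (hcont.mono hsub2)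
    -- continuity of F 0 on the big interval
    have hF0cont : ContinuousOn (F 0) (Set.Icc A (A + (m+1:ℕ))) := by
      intro t ht
      exact (hder 0 hk t ht).continuousAt.continuousWithinAt
    have hint1 : IntervalIntegrable (F 0) MeasureTheory.volume A (A + m) := by
      have : ContinuousOn (F 0) (Set.uIcc A (A + m)) := by
        rw [Set.uIcc_of_le (by linarith)]
        exact hF0cont.mono hsub
      exact this.intervalIntegrable
    have hint2 : IntervalIntegrable (F 0) MeasureTheory.volume (A + m) (A + m + 1) := by
      have : ContinuousOn (F 0) (Set.uIcc (A + m) (A + m + 1)) := by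
        rw [Set.uIcc_of_le (by linarith)]
        exact hF0cont.mono hsub2
      exact this.intervalIntegrable
    have hglue := intervalIntegral.integral_add_adjacent_intervals hint1 hint2
    rw [Finset.sum_range_succ, ihm, hPI]
    push_cast
    rw [Finset.sum_range_succ (f := fun i => ∫ t in (A + i)..(A + i + 1), EB k (t - (A + i)) * F k t)]
    have : A + (m:ℝ) + 1 = A + ((m:ℝ) + 1) := by ring
    rw [← this, ← hglue]
    have hbd : ∑ j ∈ Finset.range k, emc j * (F j (A + (m:ℝ) + 1) - F j A)
        = ∑ j ∈ Finset.range k, emc j * (F j (A + m) - F j A)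
          + ∑ j ∈ Finset.range k, emc j * (F j (A + m + 1) - F j (A + m)) := by
      rw [← Finset.sum_add_distrib]
      apply Finset.sum_congr rfl
      intro j _
      ring
    rw [hbd]
    ring

lemma EM_bound (k : ℕ) (hk : 1 ≤ k) : ∃ M : ℝ, 0 < M ∧ ∀ (A : ℝ) (m : ℕ) (F : ℕ → ℝ → ℝ),
    (∀ j < k, ∀ t ∈ Set.Icc A (A + m), HasDerivAt (F j) (F (j+1) t) t) →
    ContinuousOn (F k) (Set.Icc A (A + m)) →
    |∑ i ∈ Finset.range m, F 0 (A + i + 1) - ∫ t in A..(A + m), F 0 t|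
      ≤ M * (∑ j ∈ Finset.range k, (|F j (A + m)| + |F j A|) + ∫ t in A..(A + m), |F k t|) := by
  obtain ⟨MEB, hMEB⟩ : ∃ C : ℝ, ∀ s ∈ Set.Icc (0:ℝ) 1, |EB k s| ≤ C := by
    obtain ⟨C, hC⟩ := (isCompact_Icc (a := (0:ℝ)) (b := 1)).exists_bound_of_continuousOn
      (by simpa using (continuousOn_EB k 0).congr (fun t _ => by rw [sub_zero]))
    exact ⟨C, fun s hs => hC s hs⟩
  set M := max MEB 0 + (∑ j ∈ Finset.range k, |emc j|) + 1 with hM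
  have hM0 : 0 < M := by
    have h1 : (0:ℝ) ≤ ∑ j ∈ Finset.range k, |emc j| := Finset.sum_nonneg fun j _ => abs_nonneg _
    have h2 : (0:ℝ) ≤ max MEB 0 := le_max_right _ _
    rw [hM]; linarith
  refine ⟨M, hM0, fun A m F hder hcont => ?_⟩
  have hEM := EM_sum k hk A m F hder hcont
  rw [hEM]
  have hFkabs : ∀ i : ℕ, i < m → ∀ t ∈ Set.Icc (A + (i:ℝ)) (A + i + 1), t ∈ Set.Icc A (A + (m:ℝ)) := by
    intro i hi t ht
    have : (i:ℝ) + 1 ≤ m := by exact_mod_cast hi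
    constructor
    · have : (0:ℝ) ≤ i := by positivity
      linarith [ht.1]
    · linarith [ht.2]
  -- bound the remainder
  have hRbound : |∑ i ∈ Finset.range m, ∫ t in (A + i)..(A + i + 1), EB k (t - (A + i)) * F k t|
      ≤ max MEB 0 * ∫ t in A..(A + m), |F k t| := by
    have hterm : ∀ i ∈ Finset.range m,
        |∫ t in (A + i)..(A + i + 1), EB k (t - (A + i)) * F k t|
          ≤ ∫ t in (A + i)..(A + i + 1), max MEB 0 * |F k t| := by
      intro i hi
      simp only [Finset.mem_range] at hi
      have h1 : |∫ t in (A + i)..(A + i + 1), EB k (t - (A + i)) * F k t|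
          ≤ ∫ t in (A + i)..(A + i + 1), |EB k (t - (A + i)) * F k t| :=
        intervalIntegral.abs_integral_le_integral_abs (by linarith)
      have hcont' : ContinuousOn (F k) (Set.Icc (A + (i:ℝ)) (A + i + 1)) :=
        hcont.mono (fun t ht => hFkabs i hi t ht)
      have hci : ContinuousOn (fun t => EB k (t - (A + i)) * F k t) (Set.uIcc (A + (i:ℝ)) (A + i + 1)) := by
        rw [Set.uIcc_of_le (by linarith)]
        exact (continuousOn_EB k _).mul hcont'
      have hc2 : ContinuousOn (fun t => max MEB 0 * |F k t|) (Set.uIcc (A + (i:ℝ)) (A + i + 1)) := by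
        rw [Set.uIcc_of_le (by linarith)]
        exact (continuousOn_const.mul hcont'.abs)
      have h2 : ∫ t in (A + i)..(A + i + 1), |EB k (t - (A + i)) * F k t|
          ≤ ∫ t in (A + i)..(A + i + 1), max MEB 0 * |F k t| := by
        apply intervalIntegral.integral_mono_on (by linarith)
        · exact (hci.abs).intervalIntegrable
        · exact hc2.intervalIntegrable
        · intro t ht
          rw [abs_mul]
          apply mul_le_mul_of_nonneg_right _ (abs_nonneg _)
          have hs : t - (A + i) ∈ Set.Icc (0:ℝ) 1 := by
            constructor <;> [linarith [ht.1]; linarith [ht.2]]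
          exact le_trans (hMEB _ hs) (le_max_left _ _)
      exact le_trans h1 h2
    have habs := Finset.abs_sum_le_sum_abs
      (fun i : ℕ => ∫ t in (A + (i:ℝ))..(A + (i:ℝ) + 1), EB k (t - (A + (i:ℝ))) * F k t) (Finset.range m)
    have hsum2 : ∑ i ∈ Finset.range m, ∫ t in (A + (i:ℝ))..(A + i + 1), max MEB 0 * |F k t|
        = max MEB 0 * ∫ t in A..(A + m), |F k t| := by
      have hai : ∀ i < m, IntervalIntegrable (fun t => |F k t|) MeasureTheory.volume
          (A + i) (A + (i+1:ℕ)) := by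
        intro i hi
        have : ContinuousOn (fun t => |F k t|) (Set.uIcc (A + (i:ℝ)) (A + ((i:ℝ) + 1))) := by
          rw [Set.uIcc_of_le (by linarith)]
          refine ContinuousOn.abs (hcont.mono ?_)
          intro t ht
          refine hFkabs i hi t ?_
          simpa only [add_assoc] using ht
        have h2 := this.intervalIntegrable (μ := MeasureTheory.volume)
        convert h2 using 2
        push_cast; ring
      have hglue := intervalIntegral.sum_integral_adjacent_intervals (a := fun i : ℕ => A + i)
        (f := fun t => |F k t|) (n := m) hai
      simp only [Nat.cast_zero, add_zero] at hglue
      calc ∑ i ∈ Finset.range m, ∫ t in (A + (i:ℝ))..(A + i + 1), max MEB 0 * |F k t|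
          = ∑ i ∈ Finset.range m, max MEB 0 * ∫ t in (A + (i:ℝ))..(A + i + 1), |F k t| := by
            apply Finset.sum_congr rfl
            intro i _
            rw [intervalIntegral.integral_const_mul]
        _ = max MEB 0 * ∑ i ∈ Finset.range m, ∫ t in (A + (i:ℝ))..(A + i + 1), |F k t| := by
            rw [Finset.mul_sum]
        _ = max MEB 0 * ∫ t in A..(A + m), |F k t| := by
            rw [← hglue]
            congr 1
            apply Finset.sum_congr rfl
            intro i _
            congr 1 <;> push_cast <;> ring
    exact le_trans habs (le_trans (Finset.sum_le_sum hterm) (le_of_eq hsum2))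
  -- final assembly
  have hre : (∫ t in A..(A + (m:ℝ)), F 0 t)
      + (∑ j ∈ Finset.range k, emc j * (F j (A + m) - F j A))
      + (∑ i ∈ Finset.range m, ∫ t in (A + (i:ℝ))..(A + i + 1), EB k (t - (A + i)) * F k t)
      - (∫ t in A..(A + (m:ℝ)), F 0 t)
      = (∑ j ∈ Finset.range k, emc j * (F j (A + m) - F j A))
      + (∑ i ∈ Finset.range m, ∫ t in (A + (i:ℝ))..(A + i + 1), EB k (t - (A + i)) * F k t) := by
    ring
  rw [hre]
  have hemcM : ∀ j ∈ Finset.range k, |emc j| ≤ M := by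
    intro j hj
    have h1 : |emc j| ≤ ∑ j ∈ Finset.range k, |emc j| :=
      Finset.single_le_sum (f := fun j => |emc j|) (fun j _ => abs_nonneg _) hj
    have h2 : (0:ℝ) ≤ max MEB 0 := le_max_right _ _
    rw [hM]; linarith
  have hintnn : (0:ℝ) ≤ ∫ t in A..(A + (m:ℝ)), |F k t| := by
    apply intervalIntegral.integral_nonneg (by linarith [Nat.cast_nonneg (α := ℝ) m])
    intro t _; exact abs_nonneg _
  have hBbd : |∑ j ∈ Finset.range k, emc j * (F j (A + m) - F j A)|
      ≤ M * ∑ j ∈ Finset.range k, (|F j (A + m)| + |F j A|) := by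
    calc |∑ j ∈ Finset.range k, emc j * (F j (A + m) - F j A)|
        ≤ ∑ j ∈ Finset.range k, |emc j * (F j (A + m) - F j A)| :=
          Finset.abs_sum_le_sum_abs _ _
      _ ≤ ∑ j ∈ Finset.range k, M * (|F j (A + m)| + |F j A|) := by
          apply Finset.sum_le_sum
          intro j hj
          rw [abs_mul]
          have h1 : |F j (A + m) - F j A| ≤ |F j (A + m)| + |F j A| := abs_sub _ _
          have h2 := hemcM j hj
          have h3 : (0:ℝ) ≤ |F j (A+m) - F j A| := abs_nonneg _
          nlinarith [abs_nonneg (emc j)]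
      _ = M * ∑ j ∈ Finset.range k, (|F j (A + m)| + |F j A|) := by rw [Finset.mul_sum]
  have hMEBM : max MEB 0 ≤ M := by
    have h1 : (0:ℝ) ≤ ∑ j ∈ Finset.range k, |emc j| := Finset.sum_nonneg fun j _ => abs_nonneg _
    rw [hM]; linarith
  calc |(∑ j ∈ Finset.range k, emc j * (F j (A + m) - F j A))
      + (∑ i ∈ Finset.range m, ∫ t in (A + (i:ℝ))..(A + i + 1), EB k (t - (A + i)) * F k t)|
      ≤ |∑ j ∈ Finset.range k, emc j * (F j (A + m) - F j A)|
        + |∑ i ∈ Finset.range m, ∫ t in (A + (i:ℝ))..(A + i + 1), EB k (t - (A + i)) * F k t| :=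
        abs_add_le _ _
    _ ≤ M * (∑ j ∈ Finset.range k, (|F j (A + m)| + |F j A|)) + max MEB 0 * ∫ t in A..(A + m), |F k t| :=
        add_le_add hBbd hRbound
    _ ≤ M * (∑ j ∈ Finset.range k, (|F j (A + m)| + |F j A|)) + M * ∫ t in A..(A + m), |F k t| := by
        have := mul_le_mul_of_nonneg_right hMEBM hintnn
        linarith
    _ = M * (∑ j ∈ Finset.range k, (|F j (A + m)| + |F j A|) + ∫ t in A..(A + m), |F k t|) := by
        ring


def dP (c : ℝ) (i : ℕ) : ℝ := ∏ m ∈ Finset.range i, (c - 1 - m)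

def Fder (ω β n : ℝ) (j : ℕ) (t : ℝ) : ℝ :=
  ∑ i ∈ Finset.range (j+1),
    (j.choose i : ℝ) * dP ω i * (-1)^(j-i) * dP β (j-i)
      * (t ^ (ω-1-i) * (n-t) ^ (β-1-((j:ℝ)-i)))

lemma dP_zero (c : ℝ) : dP c 0 = 1 := by simp [dP]

lemma dP_succ (c : ℝ) (i : ℕ) : dP c (i+1) = dP c i * (c - 1 - i) := by
  simp [dP, Finset.prod_range_succ]

lemma Fder_zero_eq (ω β n t : ℝ) : Fder ω β n 0 t = t ^ (ω-1) * (n-t) ^ (β-1) := by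
  simp [Fder, dP]

lemma hasDerivAt_Fder (ω β n : ℝ) (j : ℕ) (t : ℝ) (ht0 : 0 < t) (htn : t < n) :
    HasDerivAt (Fder ω β n j) (Fder ω β n (j+1) t) t := by
  have hnt : 0 < n - t := by linarith
  -- the raw derivative
  have key : HasDerivAt (Fder ω β n j)
      (∑ i ∈ Finset.range (j+1),
        (j.choose i : ℝ) * dP ω i * (-1)^(j-i) * dP β (j-i)
          * ((ω-1-i) * t ^ (ω-1-i-1) * (n-t) ^ (β-1-((j:ℝ)-i))
             + t ^ (ω-1-i) * ((β-1-((j:ℝ)-i)) * (n-t) ^ (β-1-((j:ℝ)-i)-1) * (-1)))) t := by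
    apply HasDerivAt.fun_sum
    intro i _
    apply HasDerivAt.const_mul
    have hu : HasDerivAt (fun t : ℝ => t ^ (ω-1-i)) ((ω-1-i) * t ^ (ω-1-i-1)) t :=
      Real.hasDerivAt_rpow_const (Or.inl ht0.ne')
    have hv : HasDerivAt (fun t : ℝ => (n-t) ^ (β-1-((j:ℝ)-i)))
        ((β-1-((j:ℝ)-i)) * (n-t) ^ (β-1-((j:ℝ)-i)-1) * (-1)) t := by
      have hin : HasDerivAt (fun t : ℝ => n - t) (-1) t := by
        simpa using (hasDerivAt_id t).const_sub n
      have hout : HasDerivAt (fun s : ℝ => s ^ (β-1-((j:ℝ)-i)))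
          ((β-1-((j:ℝ)-i)) * (n-t) ^ (β-1-((j:ℝ)-i)-1)) (n - t) :=
        Real.hasDerivAt_rpow_const (Or.inl hnt.ne')
      exact hout.comp t hin
    exact hu.mul hv
  convert key using 1
  -- now the algebra
  set A : ℕ → ℝ := fun i =>
    (j.choose i : ℝ) * (dP ω i * (ω-1-i)) * (-1)^(j-i) * dP β (j-i)
      * (t ^ (ω-1-(i+1)) * (n-t) ^ (β-1-((j:ℝ)-i))) with hA
  set B : ℕ → ℝ := fun r =>
    (j.choose r : ℝ) * dP ω r * (-1)^(j+1-r) * dP β (j+1-r)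
      * (t ^ (ω-1-r) * (n-t) ^ (β-1-((j:ℝ)+1-r))) with hB
  have hsplit : ∀ i ∈ Finset.range (j+1),
      (j.choose i : ℝ) * dP ω i * (-1)^(j-i) * dP β (j-i)
          * ((ω-1-i) * t ^ (ω-1-i-1) * (n-t) ^ (β-1-((j:ℝ)-i))
             + t ^ (ω-1-i) * ((β-1-((j:ℝ)-i)) * (n-t) ^ (β-1-((j:ℝ)-i)-1) * (-1)))
        = A i + B i := by
    intro i hi
    simp only [Finset.mem_range] at hi
    have hij : i ≤ j := by omega
    have hcast : ((j - i : ℕ) : ℝ) = (j:ℝ) - i := by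
      push_cast [hij]; ring
    have hd1 : dP β (j+1-i) = dP β (j-i) * (β-1-((j:ℝ)-i)) := by
      rw [show j+1-i = (j-i)+1 by omega, dP_succ, hcast]
    have hs1 : ((-1:ℝ))^(j+1-i) = (-1)^(j-i) * (-1) := by
      rw [show j+1-i = (j-i)+1 by omega, pow_succ]
    have he1 : t ^ (ω-1-i-1) = t ^ (ω-1-((i:ℝ)+1)) := by
      rw [show ω-1-(i:ℝ)-1 = ω-1-((i:ℝ)+1) by ring]
    have he2 : (n-t) ^ (β-1-((j:ℝ)-i)-1) = (n-t) ^ (β-1-((j:ℝ)+1-i)) := by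
      rw [show β-1-((j:ℝ)-i)-1 = β-1-((j:ℝ)+1-i) by ring]
    rw [hA, hB]
    simp only []
    rw [hd1, hs1, he1, he2]
    push_cast
    ring
  rw [Finset.sum_congr rfl hsplit, Finset.sum_add_distrib]
  -- RHS : Fder (j+1)
  have hG : Fder ω β n (j+1) t
      = (∑ i ∈ Finset.range (j+1),
          ((j+1).choose (i+1) : ℝ) * dP ω (i+1) * (-1)^(j-i) * dP β (j-i)
            * (t ^ (ω-1-((i:ℝ)+1)) * (n-t) ^ (β-1-((j:ℝ)-i)))) + B 0 := by
    rw [Fder, Finset.sum_range_succ']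
    congr 1
    · apply Finset.sum_congr rfl
      intro i hi
      simp only [Finset.mem_range] at hi
      have h1 : j + 1 - (i+1) = j - i := by omega
      rw [h1]
      have : ((j:ℝ)+1) - ((i:ℝ)+1) = (j:ℝ) - i := by ring
      push_cast
      rw [show ω - 1 - ((i:ℝ)+1) = ω - 1 - (↑i + 1) from rfl]
      ring_nf
    · rw [hB]
      simp only [Nat.choose_zero_right, Nat.sub_zero, dP_zero]
      push_cast
      ring_nf
  have hpascal : ∀ i ∈ Finset.range (j+1),
      ((j+1).choose (i+1) : ℝ) * dP ω (i+1) * (-1)^(j-i) * dP β (j-i)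
          * (t ^ (ω-1-((i:ℝ)+1)) * (n-t) ^ (β-1-((j:ℝ)-i)))
        = A i + B (i+1) := by
    intro i hi
    simp only [Finset.mem_range] at hi
    have hch : ((j+1).choose (i+1) : ℝ) = (j.choose i : ℝ) + (j.choose (i+1) : ℝ) := by
      rw [Nat.choose_succ_succ]
      push_cast; ring
    have h1 : j + 1 - (i+1) = j - i := by omega
    have h2 : (j:ℝ) + 1 - ((i:ℝ)+1) = (j:ℝ) - i := by ring
    rw [hA, hB]
    simp only []
    rw [hch, h1, dP_succ]
    push_cast
    rw [h2]
    ring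
  rw [Finset.sum_congr rfl hpascal, Finset.sum_add_distrib] at hG
  have hBsum : (∑ i ∈ Finset.range (j+1), B (i+1)) + B 0 = ∑ i ∈ Finset.range (j+1), B i := by
    rw [← Finset.sum_range_succ']
    rw [Finset.sum_range_succ]
    have hBtop : B (j+1) = 0 := by
      rw [hB]; simp [Nat.choose_succ_self]
    rw [hBtop, add_zero]
  rw [hG]
  rw [← hBsum]
  ring


/-- combined bound for `|dP c i| * ∫_1^X t^(c-1-i)`. -/
lemma intpow_cases (c : ℝ) (hc : 0 < c) (i : ℕ) : ∃ E : ℝ, 0 < E ∧ ∀ X : ℝ, 1 ≤ X →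
    |dP c i| * ∫ t in (1:ℝ)..X, t ^ (c-1-(i:ℝ)) ≤ E * X ^ (max (c-(i:ℝ)) 0) := by
  have hgen : ∀ X : ℝ, 1 ≤ X → c - (i:ℝ) ≠ 0 →
      ∫ t in (1:ℝ)..X, t ^ (c-1-(i:ℝ)) = (X ^ (c-(i:ℝ)) - 1)/(c-(i:ℝ)) := by
    intro X hX hne0
    rw [integral_rpow (Or.inr ⟨by intro h; apply hne0; linarith, by
      intro h
      rw [Set.uIcc_of_le hX] at h
      linarith [h.1]⟩)]
    rw [show c - 1 - (i:ℝ) + 1 = c - (i:ℝ) by ring, Real.one_rpow]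
  rcases lt_trichotomy c (i:ℝ) with hlt | heq | hgt
  · -- c < i
    have hic : (0:ℝ) < (i:ℝ) - c := by linarith
    refine ⟨|dP c i| * (1/((i:ℝ)-c)) + 1, by positivity, fun X hX => ?_⟩
    have hXp : X ^ (c-(i:ℝ)) ≤ 1 :=
      Real.rpow_le_one_of_one_le_of_nonpos hX (by linarith)
    have hXpos : (0:ℝ) < X ^ (c-(i:ℝ)) := Real.rpow_pos_of_pos (by linarith) _
    have hint : ∫ t in (1:ℝ)..X, t ^ (c-1-(i:ℝ)) ≤ 1/((i:ℝ)-c) := by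
      rw [hgen X hX (by linarith)]
      have hflip : (X ^ (c-(i:ℝ)) - 1)/(c-(i:ℝ)) = (1 - X ^ (c-(i:ℝ)))/((i:ℝ)-c) := by
        rw [div_eq_div_iff (by linarith) (by linarith)]; ring
      rw [hflip]
      gcongr <;> linarith
    have hmax : max (c-(i:ℝ)) 0 = 0 := max_eq_right (by linarith)
    rw [hmax, Real.rpow_zero, mul_one]
    have := mul_le_mul_of_nonneg_left hint (abs_nonneg (dP c i))
    linarith
  · -- c = i : coefficient vanishes
    refine ⟨1, one_pos, fun X hX => ?_⟩
    have hz : dP c i = 0 := by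
      cases i with
      | zero => exfalso; simp at heq; linarith
      | succ m =>
        rw [dP_succ]
        have h0 : c - 1 - (m:ℝ) = 0 := by
          have : c = (m:ℝ) + 1 := by push_cast at heq ⊢; linarith
          rw [this]; ring
        rw [h0, mul_zero]
    rw [hz]
    simp only [abs_zero, zero_mul]
    positivity
  · -- c > i
    have hci : (0:ℝ) < c - i := by linarith
    refine ⟨|dP c i| * (1/(c-(i:ℝ))) + 1, by positivity, fun X hX => ?_⟩
    have hXE : (0:ℝ) < X ^ (c-(i:ℝ)) := Real.rpow_pos_of_pos (by linarith) _
    have hmax : max (c-(i:ℝ)) 0 = c - (i:ℝ) := max_eq_left hci.le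
    rw [hmax, hgen X hX (by linarith)]
    calc |dP c i| * ((X ^ (c-(i:ℝ)) - 1)/(c-(i:ℝ)))
        ≤ |dP c i| * (X ^ (c-(i:ℝ))/(c-(i:ℝ))) := by
          gcongr
          linarith
      _ = |dP c i| * (1/(c-(i:ℝ))) * X ^ (c-(i:ℝ)) := by ring
      _ ≤ (|dP c i| * (1/(c-(i:ℝ))) + 1) * X ^ (c-(i:ℝ)) := by
          apply mul_le_mul_of_nonneg_right _ hXE.le
          linarith



lemma contOn_pq (p q n a b : ℝ) (h : ∀ t ∈ Set.uIcc a b, 0 < t ∧ t < n) :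
    ContinuousOn (fun t : ℝ => t ^ p * (n-t) ^ q) (Set.uIcc a b) := by
  apply ContinuousOn.mul
  · apply ContinuousOn.rpow_const continuousOn_id
    intro t ht
    exact Or.inl (by simpa using (h t ht).1.ne')
  · apply ContinuousOn.rpow_const (continuousOn_const.sub continuousOn_id)
    intro t ht
    refine Or.inl ?_
    simp only [Pi.sub_apply, id_eq]
    have := (h t ht).2
    intro hc; rw [sub_eq_zero] at hc; rw [← hc] at this; linarith

lemma contOn_p (p a b : ℝ) (h : ∀ t ∈ Set.uIcc a b, 0 < t) :
    ContinuousOn (fun t : ℝ => t ^ p) (Set.uIcc a b) := by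
  apply ContinuousOn.rpow_const continuousOn_id
  intro t ht
  exact Or.inl (by simpa using (h t ht).ne')

/-- generic half-interval estimate:
`|dP c i| * ∫_1^{n/2} t^(c-1-i) (n-t)^q ≤ 2^|q| E n^(q + max(c-i,0))`. -/
lemma half_bound (c : ℝ) (hc : 0 < c) (i : ℕ) : ∃ E : ℝ, 0 < E ∧ ∀ n q : ℝ, 4 ≤ n →
    |dP c i| * ∫ t in (1:ℝ)..(n/2), t ^ (c-1-(i:ℝ)) * (n-t) ^ q
      ≤ E * 2^|q| * n ^ (q + max (c-(i:ℝ)) 0) := by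
  obtain ⟨E, hE, HE⟩ := intpow_cases c hc i
  refine ⟨E, hE, fun n q hn => ?_⟩
  have hn0 : (0:ℝ) < n := by linarith
  have hn2 : (1:ℝ) ≤ n/2 := by linarith
  have hnq : (0:ℝ) < n^q := Real.rpow_pos_of_pos hn0 _
  have h2q : (0:ℝ) < 2^|q| := Real.rpow_pos_of_pos (by norm_num) _
  have hmono : ∫ t in (1:ℝ)..(n/2), t ^ (c-1-(i:ℝ)) * (n-t) ^ q
      ≤ 2^|q| * n^q * ∫ t in (1:ℝ)..(n/2), t ^ (c-1-(i:ℝ)) := by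
    rw [← intervalIntegral.integral_const_mul]
    apply intervalIntegral.integral_mono_on hn2
    · apply (contOn_pq _ q n 1 (n/2) ?_).intervalIntegrable
      intro t ht
      rw [Set.uIcc_of_le hn2] at ht
      exact ⟨by linarith [ht.1], by linarith [ht.2]⟩
    · apply (continuousOn_const.mul (contOn_p _ 1 (n/2) ?_)).intervalIntegrable
      intro t ht
      rw [Set.uIcc_of_le hn2] at ht
      linarith [ht.1]
    · intro t ht
      have h1 : (n-t) ^ q ≤ 2^|q| * n^q :=
        rpow_mid_bound q n (n-t) hn0 (by linarith [ht.2]) (by linarith [ht.1])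
      have h2 : (0:ℝ) ≤ t ^ (c-1-(i:ℝ)) := Real.rpow_nonneg (by linarith [ht.1]) _
      calc t ^ (c-1-(i:ℝ)) * (n-t) ^ q ≤ t ^ (c-1-(i:ℝ)) * (2^|q| * n^q) :=
            mul_le_mul_of_nonneg_left h1 h2
        _ = 2^|q| * n^q * t ^ (c-1-(i:ℝ)) := by ring
  have hE1 := HE (n/2) hn2
  have hmax0 : (0:ℝ) ≤ max (c-(i:ℝ)) 0 := le_max_right _ _
  have hhalf : (n/2) ^ (max (c-(i:ℝ)) 0) ≤ n ^ (max (c-(i:ℝ)) 0) :=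
    Real.rpow_le_rpow (by linarith) (by linarith) hmax0
  have hnm : (0:ℝ) < n ^ (max (c-(i:ℝ)) 0) := Real.rpow_pos_of_pos hn0 _
  calc |dP c i| * ∫ t in (1:ℝ)..(n/2), t ^ (c-1-(i:ℝ)) * (n-t) ^ q
      ≤ |dP c i| * (2^|q| * n^q * ∫ t in (1:ℝ)..(n/2), t ^ (c-1-(i:ℝ))) :=
        mul_le_mul_of_nonneg_left hmono (abs_nonneg _)
    _ = 2^|q| * n^q * (|dP c i| * ∫ t in (1:ℝ)..(n/2), t ^ (c-1-(i:ℝ))) := by ring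
    _ ≤ 2^|q| * n^q * (E * (n/2) ^ (max (c-(i:ℝ)) 0)) := by
        apply mul_le_mul_of_nonneg_left hE1 (by positivity)
    _ ≤ 2^|q| * n^q * (E * n ^ (max (c-(i:ℝ)) 0)) := by
        apply mul_le_mul_of_nonneg_left _ (by positivity)
        exact mul_le_mul_of_nonneg_left hhalf hE.le
    _ = E * 2^|q| * (n^q * n ^ (max (c-(i:ℝ)) 0)) := by ring
    _ = E * 2^|q| * n ^ (q + max (c-(i:ℝ)) 0) := by
        rw [← Real.rpow_add hn0]

/-- Bound for a single term's integral over `[1, n-1]`. -/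
lemma per_i_bound (ω β : ℝ) (hω : 0 < ω) (hωβ : ω ≤ β) (k i : ℕ) (hik : i ≤ k)
    (hk : ω ≤ k) :
    ∃ C : ℝ, 0 < C ∧ ∀ n : ℝ, 4 ≤ n →
      |dP ω i| * |dP β (k-i)|
        * ∫ t in (1:ℝ)..(n-1), t ^ (ω-1-(i:ℝ)) * (n-t) ^ (β-1-((k:ℝ)-i))
      ≤ C * n ^ (β-1) := by
  obtain ⟨E1, hE1, HE1⟩ := half_bound ω hω i
  obtain ⟨E2, hE2, HE2⟩ := half_bound β (by linarith) (k-i)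
  set p := ω-1-(i:ℝ) with hp
  set q := β-1-((k:ℝ)-i) with hq
  have hcast : ((k-i:ℕ):ℝ) = (k:ℝ) - i := by push_cast [hik]; ring
  have hki : (0:ℝ) ≤ (k:ℝ) - i := by
    have : (i:ℝ) ≤ k := by exact_mod_cast hik
    linarith
  have hi0 : (0:ℝ) ≤ (i:ℝ) := Nat.cast_nonneg i
  refine ⟨|dP β (k-i)| * (E1 * 2^|q|) + |dP ω i| * (E2 * 2^|p|) + 1, by positivity,
    fun n hn => ?_⟩
  have hn0 : (0:ℝ) < n := by linarith
  have hn1 : (1:ℝ) ≤ n := by linarith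
  have hn2 : (1:ℝ) ≤ n/2 := by linarith
  have h2n : n/2 ≤ n - 1 := by linarith
  have hnb : (0:ℝ) < n^(β-1) := Real.rpow_pos_of_pos hn0 _
  -- integrability on subintervals of [1, n-1]
  have hIub : ∀ a b : ℝ, 1 ≤ a → a ≤ b → b ≤ n-1 →
      IntervalIntegrable (fun t : ℝ => t ^ p * (n-t) ^ q) MeasureTheory.volume a b := by
    intro a b ha hab hbn
    apply (contOn_pq p q n a b ?_).intervalIntegrable
    intro t ht
    rw [Set.uIcc_of_le hab] at ht
    exact ⟨by linarith [ht.1], by linarith [ht.2]⟩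
  -- split the integral
  have hsplit : ∫ t in (1:ℝ)..(n-1), t ^ p * (n-t) ^ q
      = (∫ t in (1:ℝ)..(n/2), t ^ p * (n-t) ^ q)
        + ∫ t in (n/2)..(n-1), t ^ p * (n-t) ^ q :=
    (intervalIntegral.integral_add_adjacent_intervals
      (hIub 1 (n/2) le_rfl hn2 h2n) (hIub (n/2) (n-1) hn2 h2n le_rfl)).symm
  -- right piece by reflection
  have hrefl : ∫ t in (n/2)..(n-1), t ^ p * (n-t) ^ q
      = ∫ s in (1:ℝ)..(n/2), s ^ q * (n-s) ^ p := by
    have h := intervalIntegral.integral_comp_sub_left (a := n/2) (b := n-1)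
      (fun s => s ^ q * (n-s) ^ p) n
    rw [show n - (n-1) = (1:ℝ) by ring, show n - n/2 = n/2 by ring] at h
    rw [← h]
    apply intervalIntegral.integral_congr
    intro t _
    simp only []
    rw [show n - (n - t) = t by ring]
    ring
  -- left piece bound
  have hOK1 : |dP ω i| * |dP β (k-i)| * ∫ t in (1:ℝ)..(n/2), t ^ p * (n-t) ^ q
      ≤ |dP β (k-i)| * (E1 * 2^|q|) * n ^ (β-1) := by
    have h1 := HE1 n q hn
    have hexp : q + max (ω-(i:ℝ)) 0 ≤ β - 1 := by
      rcases le_total (ω-(i:ℝ)) 0 with h|h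
      · rw [max_eq_right h, hq]; linarith
      · rw [max_eq_left h, hq]
        have : ω ≤ (k:ℝ) := hk
        linarith
    have hle : n ^ (q + max (ω-(i:ℝ)) 0) ≤ n ^ (β-1) :=
      Real.rpow_le_rpow_of_exponent_le hn1 hexp
    calc |dP ω i| * |dP β (k-i)| * ∫ t in (1:ℝ)..(n/2), t ^ p * (n-t) ^ q
        = |dP β (k-i)| * (|dP ω i| * ∫ t in (1:ℝ)..(n/2), t ^ p * (n-t) ^ q) := by ring
      _ ≤ |dP β (k-i)| * (E1 * 2^|q| * n ^ (q + max (ω-(i:ℝ)) 0)) :=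
          mul_le_mul_of_nonneg_left h1 (abs_nonneg _)
      _ ≤ |dP β (k-i)| * (E1 * 2^|q| * n ^ (β-1)) := by
          apply mul_le_mul_of_nonneg_left _ (abs_nonneg _)
          apply mul_le_mul_of_nonneg_left hle (by positivity)
      _ = |dP β (k-i)| * (E1 * 2^|q|) * n ^ (β-1) := by ring
  -- right piece bound
  have hOK2 : |dP ω i| * |dP β (k-i)| * ∫ s in (1:ℝ)..(n/2), s ^ q * (n-s) ^ p
      ≤ |dP ω i| * (E2 * 2^|p|) * n ^ (β-1) := by
    have h2 := HE2 n p hn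
    rw [hcast] at h2
    have hqe : β - 1 - ((k:ℝ)-i) = q := rfl
    rw [hqe] at h2
    have hexp : p + max (β-((k:ℝ)-i)) 0 ≤ β - 1 := by
      rcases le_total (β-((k:ℝ)-i)) 0 with h|h
      · rw [max_eq_right h, hp]; linarith
      · rw [max_eq_left h, hp]
        have : ω ≤ (k:ℝ) := hk
        linarith
    have hle : n ^ (p + max (β-((k:ℝ)-i)) 0) ≤ n ^ (β-1) :=
      Real.rpow_le_rpow_of_exponent_le hn1 hexp
    calc |dP ω i| * |dP β (k-i)| * ∫ s in (1:ℝ)..(n/2), s ^ q * (n-s) ^ p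
        = |dP ω i| * (|dP β (k-i)| * ∫ s in (1:ℝ)..(n/2), s ^ q * (n-s) ^ p) := by ring
      _ ≤ |dP ω i| * (E2 * 2^|p| * n ^ (p + max (β-((k:ℝ)-i)) 0)) :=
          mul_le_mul_of_nonneg_left h2 (abs_nonneg _)
      _ ≤ |dP ω i| * (E2 * 2^|p| * n ^ (β-1)) := by
          apply mul_le_mul_of_nonneg_left _ (abs_nonneg _)
          apply mul_le_mul_of_nonneg_left hle (by positivity)
      _ = |dP ω i| * (E2 * 2^|p|) * n ^ (β-1) := by ring
  rw [hsplit, hrefl, mul_add]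
  calc (|dP ω i| * |dP β (k-i)| * ∫ t in (1:ℝ)..(n/2), t ^ p * (n-t) ^ q)
        + |dP ω i| * |dP β (k-i)| * ∫ s in (1:ℝ)..(n/2), s ^ q * (n-s) ^ p
      ≤ |dP β (k-i)| * (E1 * 2^|q|) * n ^ (β-1) + |dP ω i| * (E2 * 2^|p|) * n ^ (β-1) :=
        add_le_add hOK1 hOK2
    _ ≤ (|dP β (k-i)| * (E1 * 2^|q|) + |dP ω i| * (E2 * 2^|p|) + 1) * n ^ (β-1) := by
        nlinarith [hnb]

lemma Fder_abs_le (ω β n : ℝ) (j : ℕ) (t : ℝ) (ht : 0 ≤ t) (htn : t ≤ n) :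
    |Fder ω β n j t| ≤ ∑ i ∈ Finset.range (j+1),
      (j.choose i : ℝ) * |dP ω i| * |dP β (j-i)|
        * (t ^ (ω-1-(i:ℝ)) * (n-t) ^ (β-1-((j:ℝ)-i))) := by
  refine le_trans (Finset.abs_sum_le_sum_abs _ _) (Finset.sum_le_sum fun i _ => ?_)
  have hxy : (0:ℝ) ≤ t ^ (ω-1-(i:ℝ)) * (n-t) ^ (β-1-((j:ℝ)-i)) := by
    apply mul_nonneg (Real.rpow_nonneg ht _) (Real.rpow_nonneg (by linarith) _)
  rw [abs_mul, abs_mul, abs_mul, abs_mul, abs_of_nonneg hxy, Nat.abs_cast, abs_pow,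
    abs_neg, abs_one, one_pow]
  apply le_of_eq
  ring

lemma remainder_bound (ω β : ℝ) (hω : 0 < ω) (hωβ : ω ≤ β) (k : ℕ) (hk : ω ≤ k) :
    ∃ C : ℝ, 0 < C ∧ ∀ n : ℝ, 4 ≤ n →
      ∫ t in (1:ℝ)..(n-1), |Fder ω β n k t| ≤ C * n ^ (β-1) := by
  have Hex : ∀ i : ℕ, ∃ C : ℝ, 0 < C ∧ (i ≤ k → ∀ n : ℝ, 4 ≤ n →
      |dP ω i| * |dP β (k-i)|
        * ∫ t in (1:ℝ)..(n-1), t ^ (ω-1-(i:ℝ)) * (n-t) ^ (β-1-((k:ℝ)-i))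
      ≤ C * n ^ (β-1)) := by
    intro i
    rcases le_or_gt i k with h | h
    · obtain ⟨C, hC, HC⟩ := per_i_bound ω β hω hωβ k i h hk
      exact ⟨C, hC, fun _ => HC⟩
    · exact ⟨1, one_pos, fun h' => absurd h' (by omega)⟩
  choose CF hCF0 hCF using Hex
  refine ⟨∑ i ∈ Finset.range (k+1), ((k.choose i : ℝ) * CF i) + 1, by
    have : ∀ i ∈ Finset.range (k+1), (0:ℝ) ≤ (k.choose i : ℝ) * CF i := by
      intro i _
      exact mul_nonneg (Nat.cast_nonneg _) (hCF0 i).le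
    have := Finset.sum_nonneg this
    linarith, fun n hn => ?_⟩
  have hn0 : (0:ℝ) < n := by linarith
  have hn1 : (1:ℝ) ≤ n - 1 := by linarith
  have hnb : (0:ℝ) < n^(β-1) := Real.rpow_pos_of_pos hn0 _
  have hconts : ∀ i : ℕ, ContinuousOn
      (fun t : ℝ => t ^ (ω-1-(i:ℝ)) * (n-t) ^ (β-1-((k:ℝ)-i))) (Set.uIcc 1 (n-1)) := by
    intro i
    apply contOn_pq
    intro t ht
    rw [Set.uIcc_of_le hn1] at ht
    exact ⟨by linarith [ht.1], by linarith [ht.2]⟩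
  have hcontF : ContinuousOn (Fder ω β n k) (Set.uIcc 1 (n-1)) := by
    apply continuousOn_finset_sum
    intro i _
    exact (continuousOn_const.mul (hconts i))
  have hptwise : ∀ t ∈ Set.Icc (1:ℝ) (n-1), |Fder ω β n k t|
      ≤ ∑ i ∈ Finset.range (k+1), (k.choose i : ℝ) * |dP ω i| * |dP β (k-i)|
          * (t ^ (ω-1-(i:ℝ)) * (n-t) ^ (β-1-((k:ℝ)-i))) := by
    intro t ht
    exact Fder_abs_le ω β n k t (by linarith [ht.1]) (by linarith [ht.2])
  have hint1 : ∫ t in (1:ℝ)..(n-1), |Fder ω β n k t|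
      ≤ ∫ t in (1:ℝ)..(n-1), ∑ i ∈ Finset.range (k+1),
          (k.choose i : ℝ) * |dP ω i| * |dP β (k-i)|
            * (t ^ (ω-1-(i:ℝ)) * (n-t) ^ (β-1-((k:ℝ)-i))) := by
    apply intervalIntegral.integral_mono_on hn1
    · exact hcontF.abs.intervalIntegrable
    · apply (continuousOn_finset_sum _ fun i _ => ?_).intervalIntegrable
      exact continuousOn_const.mul (hconts i)
    · exact hptwise
  have hint2 : ∫ t in (1:ℝ)..(n-1), ∑ i ∈ Finset.range (k+1),
        (k.choose i : ℝ) * |dP ω i| * |dP β (k-i)|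
          * (t ^ (ω-1-(i:ℝ)) * (n-t) ^ (β-1-((k:ℝ)-i)))
      = ∑ i ∈ Finset.range (k+1), ∫ t in (1:ℝ)..(n-1),
          (k.choose i : ℝ) * |dP ω i| * |dP β (k-i)|
            * (t ^ (ω-1-(i:ℝ)) * (n-t) ^ (β-1-((k:ℝ)-i))) := by
    apply intervalIntegral.integral_finset_sum
    intro i _
    exact ((continuousOn_const.mul (hconts i))).intervalIntegrable
  have hint3 : ∀ i ∈ Finset.range (k+1),
      (∫ t in (1:ℝ)..(n-1), (k.choose i : ℝ) * |dP ω i| * |dP β (k-i)|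
          * (t ^ (ω-1-(i:ℝ)) * (n-t) ^ (β-1-((k:ℝ)-i))))
      ≤ (k.choose i : ℝ) * CF i * n ^ (β-1) := by
    intro i hi
    simp only [Finset.mem_range] at hi
    have hik : i ≤ k := by omega
    have key := hCF i hik n hn
    rw [intervalIntegral.integral_const_mul]
    calc (k.choose i : ℝ) * |dP ω i| * |dP β (k-i)|
            * ∫ t in (1:ℝ)..(n-1), t ^ (ω-1-(i:ℝ)) * (n-t) ^ (β-1-((k:ℝ)-i))
        = (k.choose i : ℝ) * (|dP ω i| * |dP β (k-i)|
            * ∫ t in (1:ℝ)..(n-1), t ^ (ω-1-(i:ℝ)) * (n-t) ^ (β-1-((k:ℝ)-i))) := by ring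
      _ ≤ (k.choose i : ℝ) * (CF i * n ^ (β-1)) :=
          mul_le_mul_of_nonneg_left key (Nat.cast_nonneg _)
      _ = (k.choose i : ℝ) * CF i * n ^ (β-1) := by ring
  calc ∫ t in (1:ℝ)..(n-1), |Fder ω β n k t|
      ≤ _ := hint1
    _ = _ := hint2
    _ ≤ ∑ i ∈ Finset.range (k+1), (k.choose i : ℝ) * CF i * n ^ (β-1) :=
        Finset.sum_le_sum hint3
    _ = (∑ i ∈ Finset.range (k+1), (k.choose i : ℝ) * CF i) * n ^ (β-1) := by
        rw [← Finset.sum_mul]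
    _ ≤ (∑ i ∈ Finset.range (k+1), ((k.choose i : ℝ) * CF i) + 1) * n ^ (β-1) := by
        nlinarith [hnb]

lemma boundary_bound (ω β : ℝ) (hω : 0 < ω) (hωβ : ω ≤ β) (k : ℕ) :
    ∃ C : ℝ, 0 < C ∧ ∀ n : ℝ, 4 ≤ n →
      ∑ j ∈ Finset.range k, (|Fder ω β n j (n-1)| + |Fder ω β n j 1|)
        ≤ C * n ^ (β-1) := by
  refine ⟨(∑ j ∈ Finset.range k, ∑ i ∈ Finset.range (j+1),
      (j.choose i : ℝ) * |dP ω i| * |dP β (j-i)|) * (2^|β-1| + 2^|ω-1|) + 1, by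
        have h1 : ∀ j ∈ Finset.range k, (0:ℝ) ≤ ∑ i ∈ Finset.range (j+1),
            (j.choose i : ℝ) * |dP ω i| * |dP β (j-i)| := by
          intro j _
          apply Finset.sum_nonneg
          intro i _
          positivity
        have h2 := Finset.sum_nonneg h1
        have h3 : (0:ℝ) < 2^|β-1| + 2^|ω-1| := by positivity
        nlinarith, fun n hn => ?_⟩
  have hn0 : (0:ℝ) < n := by linarith
  have hn1 : (1:ℝ) ≤ n := by linarith
  have hn11 : (1:ℝ) ≤ n - 1 := by linarith
  have hnb : (0:ℝ) < n^(β-1) := Real.rpow_pos_of_pos hn0 _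
  have hterm : ∀ j ∈ Finset.range k, |Fder ω β n j (n-1)| + |Fder ω β n j 1|
      ≤ (∑ i ∈ Finset.range (j+1), (j.choose i : ℝ) * |dP ω i| * |dP β (j-i)|)
          * ((2^|ω-1| + 2^|β-1|) * n ^ (β-1)) := by
    intro j _
    have hb1 : |Fder ω β n j (n-1)|
        ≤ (∑ i ∈ Finset.range (j+1), (j.choose i : ℝ) * |dP ω i| * |dP β (j-i)|)
            * (2^|ω-1| * n ^ (β-1)) := by
      refine le_trans (Fder_abs_le ω β n j (n-1) (by linarith) (by linarith)) ?_
      rw [Finset.sum_mul]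
      apply Finset.sum_le_sum
      intro i hi
      simp only [Finset.mem_range] at hi
      have hji : (0:ℝ) ≤ (j:ℝ) - i := by
        have : (i:ℝ) ≤ j := by exact_mod_cast Nat.lt_succ_iff.mp hi
        linarith
      have hx : (n-1:ℝ) ^ (ω-1-(i:ℝ)) ≤ 2^|ω-1| * n ^ (β-1) := by
        calc (n-1:ℝ) ^ (ω-1-(i:ℝ)) ≤ (n-1:ℝ) ^ (ω-1) := by
              apply Real.rpow_le_rpow_of_exponent_le hn11
              have : (0:ℝ) ≤ (i:ℝ) := Nat.cast_nonneg i
              linarith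
          _ ≤ 2^|ω-1| * n ^ (ω-1) := rpow_mid_bound _ _ _ hn0 (by linarith) (by linarith)
          _ ≤ 2^|ω-1| * n ^ (β-1) := by
              apply mul_le_mul_of_nonneg_left _ (by positivity)
              exact Real.rpow_le_rpow_of_exponent_le hn1 (by linarith)
      have hy : (n-(n-1):ℝ) ^ (β-1-((j:ℝ)-i)) = 1 := by
        rw [show n-(n-1) = (1:ℝ) by ring, Real.one_rpow]
      rw [hy, mul_one]
      calc (j.choose i : ℝ) * |dP ω i| * |dP β (j-i)| * ((n-1:ℝ) ^ (ω-1-(i:ℝ)))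
          ≤ (j.choose i : ℝ) * |dP ω i| * |dP β (j-i)| * (2^|ω-1| * n ^ (β-1)) := by
            apply mul_le_mul_of_nonneg_left hx (by positivity)
        _ = _ := by ring
    have hb2 : |Fder ω β n j 1|
        ≤ (∑ i ∈ Finset.range (j+1), (j.choose i : ℝ) * |dP ω i| * |dP β (j-i)|)
            * (2^|β-1| * n ^ (β-1)) := by
      refine le_trans (Fder_abs_le ω β n j 1 (by norm_num) (by linarith)) ?_
      rw [Finset.sum_mul]
      apply Finset.sum_le_sum
      intro i hi
      simp only [Finset.mem_range] at hi
      have hji : (0:ℝ) ≤ (j:ℝ) - i := by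
        have : (i:ℝ) ≤ j := by exact_mod_cast Nat.lt_succ_iff.mp hi
        linarith
      have hx : (1:ℝ) ^ (ω-1-(i:ℝ)) = 1 := Real.one_rpow _
      have hy : (n-1:ℝ) ^ (β-1-((j:ℝ)-i)) ≤ 2^|β-1| * n ^ (β-1) := by
        calc (n-1:ℝ) ^ (β-1-((j:ℝ)-i)) ≤ (n-1:ℝ) ^ (β-1) := by
              apply Real.rpow_le_rpow_of_exponent_le hn11
              linarith
          _ ≤ 2^|β-1| * n ^ (β-1) := rpow_mid_bound _ _ _ hn0 (by linarith) (by linarith)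
      rw [hx, one_mul]
      calc (j.choose i : ℝ) * |dP ω i| * |dP β (j-i)| * ((n-1:ℝ) ^ (β-1-((j:ℝ)-i)))
          ≤ (j.choose i : ℝ) * |dP ω i| * |dP β (j-i)| * (2^|β-1| * n ^ (β-1)) := by
            apply mul_le_mul_of_nonneg_left hy (by positivity)
        _ = _ := by ring
    calc |Fder ω β n j (n-1)| + |Fder ω β n j 1|
        ≤ (∑ i ∈ Finset.range (j+1), (j.choose i : ℝ) * |dP ω i| * |dP β (j-i)|)
            * (2^|ω-1| * n ^ (β-1))
          + (∑ i ∈ Finset.range (j+1), (j.choose i : ℝ) * |dP ω i| * |dP β (j-i)|)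
            * (2^|β-1| * n ^ (β-1)) := add_le_add hb1 hb2
      _ = _ := by ring
  calc ∑ j ∈ Finset.range k, (|Fder ω β n j (n-1)| + |Fder ω β n j 1|)
      ≤ ∑ j ∈ Finset.range k,
          (∑ i ∈ Finset.range (j+1), (j.choose i : ℝ) * |dP ω i| * |dP β (j-i)|)
            * ((2^|ω-1| + 2^|β-1|) * n ^ (β-1)) := Finset.sum_le_sum hterm
    _ = (∑ j ∈ Finset.range k, ∑ i ∈ Finset.range (j+1),
          (j.choose i : ℝ) * |dP ω i| * |dP β (j-i)|) * ((2^|ω-1| + 2^|β-1|) * n ^ (β-1)) := by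
        rw [Finset.sum_mul]
    _ ≤ ((∑ j ∈ Finset.range k, ∑ i ∈ Finset.range (j+1),
          (j.choose i : ℝ) * |dP ω i| * |dP β (j-i)|) * (2^|β-1| + 2^|ω-1|) + 1) * n ^ (β-1) := by
        nlinarith [hnb]


/-- The real Beta integral in terms of Gamma. -/
lemma real_beta (ω β : ℝ) (hω : 0 < ω) (hβ : 0 < β) :
    ∫ s in (0:ℝ)..1, s^(ω-1)*(1-s)^(β-1)
      = Real.Gamma ω * Real.Gamma β / Real.Gamma (ω+β) := by
  have h := Complex.Gamma_mul_Gamma_eq_betaIntegral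
    (s := (ω:ℂ)) (t := (β:ℂ)) (by simpa using hω) (by simpa using hβ)
  have hbeta : Complex.betaIntegral (ω:ℂ) (β:ℂ)
      = ((∫ s in (0:ℝ)..1, s^(ω-1)*(1-s)^(β-1) : ℝ) : ℂ) := by
    rw [Complex.betaIntegral, ← intervalIntegral.integral_ofReal]
    apply intervalIntegral.integral_congr
    intro x hx
    rw [Set.uIcc_of_le (by norm_num : (0:ℝ) ≤ 1)] at hx
    push_cast
    rw [Complex.ofReal_cpow hx.1, Complex.ofReal_cpow (by linarith [hx.2])]
    push_cast
    ring
  rw [hbeta] at h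
  have hG : ((Real.Gamma ω * Real.Gamma β : ℝ) : ℂ)
      = ((Real.Gamma (ω+β) * ∫ s in (0:ℝ)..1, s^(ω-1)*(1-s)^(β-1) : ℝ) : ℂ) := by
    push_cast
    rw [← Complex.Gamma_ofReal, ← Complex.Gamma_ofReal]
    push_cast at h ⊢
    rw [h, ← Complex.Gamma_ofReal]
    push_cast
    ring
  have hGr : Real.Gamma ω * Real.Gamma β
      = Real.Gamma (ω+β) * ∫ s in (0:ℝ)..1, s^(ω-1)*(1-s)^(β-1) :=
    Complex.ofReal_inj.mp hG
  have hne : Real.Gamma (ω+β) ≠ 0 := (Real.Gamma_pos_of_pos (by linarith)).ne'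
  field_simp
  linarith [hGr]

/-- Scaling: `∫_0^n t^(ω-1) (n-t)^(β-1) = B(ω,β) n^(ω+β-1)`. -/
lemma scaled_beta (ω β : ℝ) (hω : 0 < ω) (hβ : 0 < β) (n : ℝ) (hn : 0 < n) :
    ∫ t in (0:ℝ)..n, t^(ω-1)*(n-t)^(β-1)
      = (Real.Gamma ω * Real.Gamma β / Real.Gamma (ω+β)) * n^(ω+β-1) := by
  have hsub := intervalIntegral.integral_comp_mul_left
    (a := (0:ℝ)) (b := 1) (fun t => t^(ω-1)*(n-t)^(β-1)) hn.ne'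
  rw [mul_zero, mul_one] at hsub
  -- hsub : ∫ x in 0..1, f (n * x) = n⁻¹ • ∫ x in 0..n, f x
  have hcongr : ∫ x in (0:ℝ)..1, (n*x)^(ω-1)*(n-n*x)^(β-1)
      = ∫ x in (0:ℝ)..1, (n^(ω-1)*n^(β-1)) * (x^(ω-1)*(1-x)^(β-1)) := by
    apply intervalIntegral.integral_congr
    intro x hx
    rw [Set.uIcc_of_le (by norm_num : (0:ℝ) ≤ 1)] at hx
    show (n*x)^(ω-1)*(n-n*x)^(β-1) = _
    rw [Real.mul_rpow hn.le hx.1, show n - n*x = n*(1-x) by ring,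
      Real.mul_rpow hn.le (by linarith [hx.2])]
    ring
  rw [hcongr, intervalIntegral.integral_const_mul, real_beta ω β hω hβ] at hsub
  have h2 : ∫ t in (0:ℝ)..n, t^(ω-1)*(n-t)^(β-1)
      = n * (n^(ω-1)*n^(β-1) * (Real.Gamma ω * Real.Gamma β / Real.Gamma (ω+β))) := by
    have := congrArg (fun z => n * z) hsub
    simp only [smul_eq_mul] at this
    rw [show n * (n⁻¹ * ∫ (x : ℝ) in (0:ℝ)..n, x ^ (ω - 1) * (n - x) ^ (β - 1))
      = ∫ (x : ℝ) in (0:ℝ)..n, x ^ (ω - 1) * (n - x) ^ (β - 1) from by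
        field_simp] at this
    rw [this]
  rw [h2]
  have h3 : n * (n^(ω-1)*n^(β-1)) = n^(ω+β-1) := by
    have e1 : n^(ω-1)*n^(β-1) = n^(ω+β-2) := by
      rw [← Real.rpow_add hn]; ring_nf
    have e2 : n^(ω+β-1) = n * n^(ω+β-2) := by
      rw [show ω+β-1 = 1 + (ω+β-2) by ring, Real.rpow_add hn, Real.rpow_one]
    rw [e1, e2]
  calc n * (n^(ω-1)*n^(β-1) * (Real.Gamma ω * Real.Gamma β / Real.Gamma (ω+β)))
      = (n * (n^(ω-1)*n^(β-1))) * (Real.Gamma ω * Real.Gamma β / Real.Gamma (ω+β)) := by ring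
    _ = _ := by rw [h3]; ring

lemma central_integral (ω β : ℝ) (hω : 0 < ω) (hβ : 0 < β) (hωβ : ω ≤ β) :
    ∃ C : ℝ, 0 < C ∧ ∀ n : ℝ, 4 ≤ n →
      |(∫ t in (1:ℝ)..(n-1), t^(ω-1)*(n-t)^(β-1))
        - (Real.Gamma ω * Real.Gamma β / Real.Gamma (ω+β)) * n^(ω+β-1)|
      ≤ C * n^(β-1) := by
  refine ⟨2^|β-1|/ω + 2^|ω-1|/β, by positivity, fun n hn => ?_⟩
  have hn0 : (0:ℝ) < n := by linarith
  have hn1 : (1:ℝ) ≤ n - 1 := by linarith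
  have hnb : (0:ℝ) < n^(β-1) := Real.rpow_pos_of_pos hn0 _
  have hno : (0:ℝ) < n^(ω-1) := Real.rpow_pos_of_pos hn0 _
  -- integrability pieces
  have hcont01 : ContinuousOn (fun t : ℝ => (n-t)^(β-1)) (Set.uIcc (0:ℝ) 1) := by
    apply ContinuousOn.rpow_const (continuousOn_const.sub continuousOn_id)
    intro t ht
    rw [Set.uIcc_of_le (by norm_num : (0:ℝ) ≤ 1)] at ht
    refine Or.inl ?_
    simp only [Pi.sub_apply, id_eq]
    intro hc; rw [sub_eq_zero] at hc; rw [hc] at hn; linarith [ht.2]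
  have I01 : IntervalIntegrable (fun t : ℝ => t^(ω-1)*(n-t)^(β-1))
      MeasureTheory.volume 0 1 :=
    (intervalIntegral.intervalIntegrable_rpow' (by linarith)).mul_continuousOn hcont01
  have I1n1 : IntervalIntegrable (fun t : ℝ => t^(ω-1)*(n-t)^(β-1))
      MeasureTheory.volume 1 (n-1) := by
    apply (contOn_pq (ω-1) (β-1) n 1 (n-1) ?_).intervalIntegrable
    intro t ht
    rw [Set.uIcc_of_le hn1] at ht
    exact ⟨by linarith [ht.1], by linarith [ht.2]⟩
  have hIsub : IntervalIntegrable (fun t : ℝ => (n-t)^(β-1)) MeasureTheory.volume (n-1) n := by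
    have h1 : IntervalIntegrable (fun s : ℝ => s^(β-1)) MeasureTheory.volume 0 1 :=
      intervalIntegral.intervalIntegrable_rpow' (by linarith)
    have h2 := h1.comp_sub_left n
    rw [show n - 0 = n by ring, show n - 1 = n-1 from rfl] at h2
    exact h2.symm
  have hcontn1 : ContinuousOn (fun t : ℝ => t^(ω-1)) (Set.uIcc (n-1) n) := by
    apply ContinuousOn.rpow_const continuousOn_id
    intro t ht
    rw [Set.uIcc_of_le (by linarith)] at ht
    refine Or.inl ?_
    simp only [id_eq]
    intro hc; rw [hc] at ht; linarith [ht.1]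
  have In1n : IntervalIntegrable (fun t : ℝ => t^(ω-1)*(n-t)^(β-1))
      MeasureTheory.volume (n-1) n := hIsub.continuousOn_mul hcontn1
  -- splitting
  have a1 := intervalIntegral.integral_add_adjacent_intervals I01 I1n1
  have a2 := intervalIntegral.integral_add_adjacent_intervals (I01.trans I1n1) In1n
  -- edge bounds
  have e1u : ∫ t in (0:ℝ)..1, t^(ω-1)*(n-t)^(β-1) ≤ (2^|β-1| * n^(β-1)) / ω := by
    have hmono : ∫ t in (0:ℝ)..1, t^(ω-1)*(n-t)^(β-1)
        ≤ ∫ t in (0:ℝ)..1, (2^|β-1| * n^(β-1)) * t^(ω-1) := by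
      apply intervalIntegral.integral_mono_on (by norm_num) I01
      · exact (intervalIntegral.intervalIntegrable_rpow' (by linarith)).const_mul _
      · intro t ht
        have h1 : (n-t)^(β-1) ≤ 2^|β-1| * n^(β-1) :=
          rpow_mid_bound _ _ _ hn0 (by linarith [ht.2]) (by linarith [ht.1])
        have h2 : (0:ℝ) ≤ t^(ω-1) := Real.rpow_nonneg ht.1 _
        calc t^(ω-1)*(n-t)^(β-1) ≤ t^(ω-1) * (2^|β-1| * n^(β-1)) :=
              mul_le_mul_of_nonneg_left h1 h2
          _ = (2^|β-1| * n^(β-1)) * t^(ω-1) := by ring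
    have hval : ∫ t in (0:ℝ)..1, (2^|β-1| * n^(β-1)) * t^(ω-1)
        = (2^|β-1| * n^(β-1)) / ω := by
      rw [intervalIntegral.integral_const_mul, integral_rpow (Or.inl (by linarith))]
      rw [show ω - 1 + 1 = ω by ring, Real.one_rpow, Real.zero_rpow hω.ne']
      ring
    linarith [hmono, le_of_eq hval]
  have e1l : (0:ℝ) ≤ ∫ t in (0:ℝ)..1, t^(ω-1)*(n-t)^(β-1) := by
    apply intervalIntegral.integral_nonneg (by norm_num)
    intro t ht
    exact mul_nonneg (Real.rpow_nonneg ht.1 _) (Real.rpow_nonneg (by linarith [ht.2]) _)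
  have e2u : ∫ t in (n-1)..n, t^(ω-1)*(n-t)^(β-1) ≤ (2^|ω-1| * n^(β-1)) / β := by
    have hmono : ∫ t in (n-1)..n, t^(ω-1)*(n-t)^(β-1)
        ≤ ∫ t in (n-1)..n, (2^|ω-1| * n^(β-1)) * (n-t)^(β-1) := by
      apply intervalIntegral.integral_mono_on (by linarith) In1n (hIsub.const_mul _)
      intro t ht
      have h1 : t^(ω-1) ≤ 2^|ω-1| * n^(ω-1) :=
        rpow_mid_bound _ _ _ hn0 (by linarith [ht.1]) (by linarith [ht.2])
      have h1' : 2^|ω-1| * n^(ω-1) ≤ 2^|ω-1| * n^(β-1) := by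
        apply mul_le_mul_of_nonneg_left _ (by positivity)
        exact Real.rpow_le_rpow_of_exponent_le (by linarith) (by linarith)
      have h2 : (0:ℝ) ≤ (n-t)^(β-1) := Real.rpow_nonneg (by linarith [ht.2]) _
      calc t^(ω-1)*(n-t)^(β-1) ≤ (2^|ω-1| * n^(β-1)) * (n-t)^(β-1) :=
            mul_le_mul_of_nonneg_right (by linarith) h2
        _ = _ := by ring
    have hval : ∫ t in (n-1)..n, (2^|ω-1| * n^(β-1)) * (n-t)^(β-1)
        = (2^|ω-1| * n^(β-1)) / β := by
      rw [intervalIntegral.integral_const_mul]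
      have hsub := intervalIntegral.integral_comp_sub_left (a := n-1) (b := n)
        (fun s => s^(β-1)) n
      rw [show n - n = (0:ℝ) by ring, show n - (n-1) = (1:ℝ) by ring] at hsub
      rw [hsub, integral_rpow (Or.inl (by linarith))]
      rw [show β - 1 + 1 = β by ring, Real.one_rpow, Real.zero_rpow hβ.ne']
      ring
    linarith [hmono, le_of_eq hval]
  have e2l : (0:ℝ) ≤ ∫ t in (n-1)..n, t^(ω-1)*(n-t)^(β-1) := by
    apply intervalIntegral.integral_nonneg (by linarith)
    intro t ht
    exact mul_nonneg (Real.rpow_nonneg (by linarith [ht.1]) _)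
      (Real.rpow_nonneg (by linarith [ht.2]) _)
  -- assemble
  have hval : (∫ t in (1:ℝ)..(n-1), t^(ω-1)*(n-t)^(β-1))
      - (Real.Gamma ω * Real.Gamma β / Real.Gamma (ω+β)) * n^(ω+β-1)
      = -(∫ t in (0:ℝ)..1, t^(ω-1)*(n-t)^(β-1))
        - ∫ t in (n-1)..n, t^(ω-1)*(n-t)^(β-1) := by
    have hB := scaled_beta ω β hω hβ n hn0
    rw [← hB, ← a2, ← a1]
    ring
  rw [hval]
  have habs : |-(∫ t in (0:ℝ)..1, t^(ω-1)*(n-t)^(β-1))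
      - ∫ t in (n-1)..n, t^(ω-1)*(n-t)^(β-1)|
      ≤ (2^|β-1| * n^(β-1)) / ω + (2^|ω-1| * n^(β-1)) / β := by
    rw [abs_of_nonpos (by linarith)]
    linarith
  calc |-(∫ t in (0:ℝ)..1, t^(ω-1)*(n-t)^(β-1))
      - ∫ t in (n-1)..n, t^(ω-1)*(n-t)^(β-1)|
      ≤ (2^|β-1| * n^(β-1)) / ω + (2^|ω-1| * n^(β-1)) / β := habs
    _ = (2^|β-1|/ω + 2^|ω-1|/β) * n^(β-1) := by ring



lemma conv_asymp (ω β : ℝ) (hω : 0 < ω) (hβ : 0 < β) (hωβ : ω ≤ β) :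
    ∃ K : ℝ, 0 < K ∧ ∀ n : ℕ, 1 ≤ n →
      |(∑ x ∈ Finset.Ioo 0 n, (x:ℝ)^(ω-1) * ((n-x:ℕ):ℝ)^(β-1))
        - (Real.Gamma ω * Real.Gamma β / Real.Gamma (ω+β)) * (n:ℝ)^(ω+β-1)|
      ≤ K * (n:ℝ)^(β-1) := by
  set k := ⌈ω⌉₊ with hkdef
  have hk1 : 1 ≤ k := Nat.one_le_iff_ne_zero.mpr (by
    intro h
    rw [hkdef] at h
    have := Nat.ceil_pos.mpr hω
    omega)
  have hkω : ω ≤ (k:ℝ) := Nat.le_ceil ω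
  obtain ⟨M, hM, HM⟩ := EM_bound k hk1
  obtain ⟨CR, hCR, HCR⟩ := remainder_bound ω β hω hωβ k hkω
  obtain ⟨CB, hCB, HCB⟩ := boundary_bound ω β hω hωβ k
  obtain ⟨CI, hCI, HCI⟩ := central_integral ω β hω hβ hωβ
  apply absorb_small _ _ 4 (2^|β-1| + M*(CB + CR) + CI)
  intro n hn4
  have hn0 : (0:ℝ) < n := by positivity
  have hn4' : (4:ℝ) ≤ n := by exact_mod_cast hn4
  have hnb : (0:ℝ) < (n:ℝ)^(β-1) := Real.rpow_pos_of_pos hn0 _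
  have hA : (1:ℝ) + ((n-2:ℕ):ℝ) = (n:ℝ) - 1 := by
    have : 2 ≤ n := by omega
    push_cast [this]
    ring
  -- rewrite the sum over Ioo as f(1) + EM-range sum
  have hsum1 : ∑ x ∈ Finset.Ioo 0 n, (x:ℝ)^(ω-1) * ((n-x:ℕ):ℝ)^(β-1)
      = ∑ x ∈ Finset.Ioo 0 n, Fder ω β n 0 (x:ℝ) := by
    apply Finset.sum_congr rfl
    intro x hx
    simp only [Finset.mem_Ioo] at hx
    rw [Fder_zero_eq]
    have : ((n-x:ℕ):ℝ) = (n:ℝ) - x := by push_cast [hx.2.le]; ring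
    rw [this]
  have hIoo : Finset.Ioo 0 n = Finset.Icc 1 (n-1) := by
    ext x; simp only [Finset.mem_Ioo, Finset.mem_Icc]; omega
  have hicc : Finset.Icc 1 (n-1) = Finset.cons 1 (Finset.Ioc 1 (n-1))
      (by simp) := by
    rw [Finset.Icc_eq_cons_Ioc (by omega)]
  have hsum2 : ∑ x ∈ Finset.Ioo 0 n, Fder ω β n 0 (x:ℝ)
      = Fder ω β n 0 1 + ∑ i ∈ Finset.range (n-2), Fder ω β n 0 (1 + (i:ℝ) + 1) := by
    rw [hIoo, hicc, Finset.sum_cons]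
    congr 1
    · norm_num
    · apply Finset.sum_nbij' (fun x => x - 2) (fun i => i + 2)
      · intro a ha; simp only [Finset.mem_Ioc, Finset.mem_range] at *; omega
      · intro a ha; simp only [Finset.mem_Ioc, Finset.mem_range] at *; omega
      · intro a ha; simp only [Finset.mem_Ioc] at ha; omega
      · intro a ha; simp only [Finset.mem_range] at ha; omega
      · intro a ha
        simp only [Finset.mem_Ioc] at ha
        congr 1
        have : 2 ≤ a := by omega
        push_cast [Nat.cast_sub this]
        ring
  -- EM application
  have hder : ∀ j < k, ∀ t ∈ Set.Icc (1:ℝ) (1 + ((n-2:ℕ):ℝ)),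
      HasDerivAt (Fder ω β n j) (Fder ω β n (j+1) t) t := by
    intro j _ t ht
    rw [hA] at ht
    exact hasDerivAt_Fder ω β n j t (by linarith [ht.1]) (by linarith [ht.2])
  have hcont : ContinuousOn (Fder ω β n k) (Set.Icc (1:ℝ) (1 + ((n-2:ℕ):ℝ))) := by
    intro t ht
    rw [hA] at ht
    exact (hasDerivAt_Fder ω β n k t (by linarith [ht.1])
      (by linarith [ht.2])).continuousAt.continuousWithinAt
  have hEM := HM 1 (n-2) (Fder ω β n) hder hcont
  rw [hA] at hEM
  -- bound the EM error pieces
  have hbd := HCB n hn4'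
  have hrem := HCR n hn4'
  have hEM2 : |∑ i ∈ Finset.range (n-2), Fder ω β n 0 (1 + (i:ℝ) + 1)
      - ∫ t in (1:ℝ)..((n:ℝ)-1), Fder ω β n 0 t|
      ≤ M * (CB * (n:ℝ)^(β-1) + CR * (n:ℝ)^(β-1)) := by
    refine le_trans hEM ?_
    apply mul_le_mul_of_nonneg_left _ hM.le
    exact add_le_add hbd hrem
  -- f(1) bound
  have hf1 : |Fder ω β n 0 1| ≤ 2^|β-1| * (n:ℝ)^(β-1) := by
    rw [Fder_zero_eq, Real.one_rpow, one_mul]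
    rw [abs_of_nonneg (Real.rpow_nonneg (by linarith) _)]
    exact rpow_mid_bound _ _ _ hn0 (by linarith) (by linarith)
  -- central integral
  have hci := HCI n hn4'
  have hintswap : ∫ t in (1:ℝ)..((n:ℝ)-1), Fder ω β n 0 t
      = ∫ t in (1:ℝ)..((n:ℝ)-1), t^(ω-1)*((n:ℝ)-t)^(β-1) := by
    apply intervalIntegral.integral_congr
    intro t _
    rw [Fder_zero_eq]
  -- assemble
  rw [hsum1, hsum2]
  have key : Fder ω β n 0 1 + (∑ i ∈ Finset.range (n-2), Fder ω β n 0 (1 + (i:ℝ) + 1))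
      - (Real.Gamma ω * Real.Gamma β / Real.Gamma (ω+β)) * (n:ℝ)^(ω+β-1)
      = Fder ω β n 0 1
        + (∑ i ∈ Finset.range (n-2), Fder ω β n 0 (1 + (i:ℝ) + 1)
            - ∫ t in (1:ℝ)..((n:ℝ)-1), Fder ω β n 0 t)
        + ((∫ t in (1:ℝ)..((n:ℝ)-1), t^(ω-1)*((n:ℝ)-t)^(β-1))
            - (Real.Gamma ω * Real.Gamma β / Real.Gamma (ω+β)) * (n:ℝ)^(ω+β-1)) := by
    rw [← hintswap]
    ring
  rw [key]
  calc |Fder ω β n 0 1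
        + (∑ i ∈ Finset.range (n-2), Fder ω β n 0 (1 + (i:ℝ) + 1)
            - ∫ t in (1:ℝ)..((n:ℝ)-1), Fder ω β n 0 t)
        + ((∫ t in (1:ℝ)..((n:ℝ)-1), t^(ω-1)*((n:ℝ)-t)^(β-1))
            - (Real.Gamma ω * Real.Gamma β / Real.Gamma (ω+β)) * (n:ℝ)^(ω+β-1))|
      ≤ |Fder ω β n 0 1|
        + |∑ i ∈ Finset.range (n-2), Fder ω β n 0 (1 + (i:ℝ) + 1)
            - ∫ t in (1:ℝ)..((n:ℝ)-1), Fder ω β n 0 t|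
        + |(∫ t in (1:ℝ)..((n:ℝ)-1), t^(ω-1)*((n:ℝ)-t)^(β-1))
            - (Real.Gamma ω * Real.Gamma β / Real.Gamma (ω+β)) * (n:ℝ)^(ω+β-1)| :=
        abs_add_three _ _ _
    _ ≤ 2^|β-1| * (n:ℝ)^(β-1) + M * (CB * (n:ℝ)^(β-1) + CR * (n:ℝ)^(β-1))
        + CI * (n:ℝ)^(β-1) := by
        exact add_le_add (add_le_add hf1 hEM2) hci
    _ = (2^|β-1| + M*(CB + CR) + CI) * (n:ℝ)^(β-1) := by ring


def comps (l n : ℕ) : Finset (Fin l → ℕ) :=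
  (Finset.Nat.antidiagonalTuple l n).filter (fun v => ∀ i, 1 ≤ v i)

def S (ω : ℝ) (l n : ℕ) : ℝ := ∑ v ∈ comps l n, ∏ i, ((v i : ℝ) ^ (ω - 1))

lemma mem_comps (l n : ℕ) (v : Fin l → ℕ) :
    v ∈ comps l n ↔ (∀ i, 1 ≤ v i) ∧ ∑ i, v i = n := by
  rw [comps, Finset.mem_filter, Finset.Nat.mem_antidiagonalTuple]
  tauto

lemma tsum_eq_S (ω : ℝ) (l n : ℕ) :
    (∑' v : {v : Fin l → ℕ // (∀ i, 1 ≤ v i) ∧ ∑ i, v i = n},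
        ∏ i, ((v.1 i : ℝ) ^ (ω - 1))) = S ω l n := by
  haveI hF : Fintype {v : Fin l → ℕ // (∀ i, 1 ≤ v i) ∧ ∑ i, v i = n} :=
    Fintype.ofFinset (comps l n) (fun v => mem_comps l n v)
  rw [tsum_fintype, S]
  exact (Finset.sum_subtype (comps l n) (fun v => mem_comps l n v)
    (fun v => ∏ i, ((v i : ℝ) ^ (ω - 1)))).symm

lemma S_one (ω : ℝ) (n : ℕ) (hn : 1 ≤ n) : S ω 1 n = (n:ℝ)^(ω-1) := by
  have hc : comps 1 n = {fun _ => n} := by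
    ext v
    rw [mem_comps, Finset.mem_singleton]
    constructor
    · rintro ⟨h1, h2⟩
      funext i
      have : v 0 = n := by rwa [Fin.sum_univ_one] at h2
      have hi : i = 0 := Subsingleton.elim _ _
      rw [hi, this]
    · rintro rfl
      exact ⟨fun _ => hn, by rw [Fin.sum_univ_one]⟩
  rw [S, hc, Finset.sum_singleton, Fin.prod_univ_one]

lemma S_rec (ω : ℝ) (l n : ℕ) (hl : 1 ≤ l) :
    S ω (l+1) n = ∑ x ∈ Finset.Ioo 0 n, (x:ℝ)^(ω-1) * S ω l (n-x) := by
  rw [S]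
  have hrhs : ∑ x ∈ Finset.Ioo 0 n, (x:ℝ)^(ω-1) * S ω l (n-x)
      = ∑ p ∈ (Finset.Ioo 0 n).sigma (fun x => comps l (n-x)),
          (p.1:ℝ)^(ω-1) * ∏ i, ((p.2 i : ℝ) ^ (ω - 1)) := by
    rw [Finset.sum_sigma]
    apply Finset.sum_congr rfl
    intro x _
    rw [S, Finset.mul_sum]
  rw [hrhs]
  apply Finset.sum_nbij' (i := fun v => (⟨v 0, fun i => v i.succ⟩ :
      (_ : ℕ) × (Fin l → ℕ))) (j := fun p => Fin.cons p.1 p.2)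
  · -- maps to sigma
    intro v hv
    rw [mem_comps] at hv
    obtain ⟨h1, h2⟩ := hv
    rw [Fin.sum_univ_succ] at h2
    have htail : l ≤ ∑ i : Fin l, v i.succ := by
      calc l = ∑ _i : Fin l, 1 := by simp
        _ ≤ ∑ i : Fin l, v i.succ := Finset.sum_le_sum (fun i _ => h1 i.succ)
    simp only [Finset.mem_sigma, Finset.mem_Ioo, mem_comps]
    refine ⟨⟨h1 0, by omega⟩, fun i => h1 i.succ, by omega⟩
  · -- maps back
    intro p hp
    simp only [Finset.mem_sigma, Finset.mem_Ioo, mem_comps] at hp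
    obtain ⟨⟨hx0, hxn⟩, hw1, hw2⟩ := hp
    rw [mem_comps]
    constructor
    · intro i
      refine Fin.cases ?_ ?_ i
      · exact hx0
      · intro j; exact hw1 j
    · rw [Fin.sum_univ_succ]
      simp only [Fin.cons_zero, Fin.cons_succ]
      omega
  · intro v _
    exact Fin.cons_self_tail v
  · intro p hp
    simp [Fin.cons_succ]
  · intro v hv
    rw [Fin.prod_univ_succ]



lemma S_asymp (ω : ℝ) (hω : 0 < ω) : ∀ l : ℕ, 2 ≤ l → ∃ K : ℝ, 0 < K ∧ ∀ n : ℕ, 1 ≤ n →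
    |S ω l n - Real.Gamma ω ^ l / Real.Gamma ((l:ℝ) * ω) * (n:ℝ)^((l:ℝ)*ω - 1)|
      ≤ K * (n:ℝ)^(((l:ℝ)-1)*ω-1) := by
  intro l
  induction l with
  | zero => omega
  | succ l ih =>
    intro hl2
    rcases Nat.lt_or_ge l 2 with hl | hl
    · -- base case : l + 1 = 2
      have hl1 : l = 1 := by omega
      subst hl1
      obtain ⟨K, hK, HK⟩ := conv_asymp ω ω hω hω le_rfl
      refine ⟨K, hK, fun n hn => ?_⟩
      have hs : S ω 2 n = ∑ x ∈ Finset.Ioo 0 n, (x:ℝ)^(ω-1) * ((n-x:ℕ):ℝ)^(ω-1) := by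
        rw [S_rec ω 1 n le_rfl]
        apply Finset.sum_congr rfl
        intro x hx
        simp only [Finset.mem_Ioo] at hx
        rw [S_one ω (n-x) (by omega)]
      have he1 : ((2:ℕ):ℝ)*ω - 1 = ω + ω - 1 := by push_cast; ring
      have he2 : (((2:ℕ):ℝ)-1)*ω - 1 = ω - 1 := by push_cast; ring
      have he3 : Real.Gamma ω ^ 2 / Real.Gamma (((2:ℕ):ℝ) * ω)
          = Real.Gamma ω * Real.Gamma ω / Real.Gamma (ω+ω) := by
        rw [show ((2:ℕ):ℝ)*ω = ω + ω by push_cast; ring]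
        ring_nf
      rw [hs, he1, he2, he3]
      exact HK n hn
    · -- inductive step, l ≥ 2
      obtain ⟨K, hK, HK⟩ := ih hl
      have hl0 : (2:ℝ) ≤ (l:ℝ) := by exact_mod_cast hl
      have hlω : 0 < (l:ℝ)*ω := by nlinarith
      have hl1ω : 0 < ((l:ℝ)-1)*ω := by nlinarith
      obtain ⟨K1, hK1, HK1⟩ := conv_asymp ω ((l:ℝ)*ω) hω hlω (by nlinarith)
      obtain ⟨K2, hK2, HK2⟩ := conv_crude ω (((l:ℝ)-1)*ω) hω hl1ω
      set cl := Real.Gamma ω ^ l / Real.Gamma ((l:ℝ) * ω) with hcl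
      refine ⟨|cl| * K1 + K * K2, by positivity, fun n hn => ?_⟩
      have hGl : Real.Gamma ((l:ℝ)*ω) ≠ 0 := (Real.Gamma_pos_of_pos hlω).ne'
      have hGl1 : Real.Gamma (((l:ℝ)+1)*ω) ≠ 0 :=
        (Real.Gamma_pos_of_pos (by nlinarith)).ne'
      -- decompose
      have hdecomp : S ω (l+1) n
          = cl * (∑ x ∈ Finset.Ioo 0 n, (x:ℝ)^(ω-1) * ((n-x:ℕ):ℝ)^((l:ℝ)*ω-1))
            + ∑ x ∈ Finset.Ioo 0 n, (x:ℝ)^(ω-1)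
                * (S ω l (n-x) - cl * ((n-x:ℕ):ℝ)^((l:ℝ)*ω-1)) := by
        rw [S_rec ω l n (by omega), Finset.mul_sum, ← Finset.sum_add_distrib]
        apply Finset.sum_congr rfl
        intro x _
        ring
      -- Gamma identity
      have hgam : cl * (Real.Gamma ω * Real.Gamma ((l:ℝ)*ω) / Real.Gamma (ω+(l:ℝ)*ω))
          = Real.Gamma ω ^ (l+1) / Real.Gamma (((l:ℝ)+1) * ω) := by
        rw [hcl, show ω + (l:ℝ)*ω = ((l:ℝ)+1)*ω by ring]
        field_simp
        ring
      -- error term bound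
      have herr : |∑ x ∈ Finset.Ioo 0 n, (x:ℝ)^(ω-1)
            * (S ω l (n-x) - cl * ((n-x:ℕ):ℝ)^((l:ℝ)*ω-1))|
          ≤ K * K2 * (n:ℝ)^((l:ℝ)*ω-1) := by
        calc |∑ x ∈ Finset.Ioo 0 n, (x:ℝ)^(ω-1)
              * (S ω l (n-x) - cl * ((n-x:ℕ):ℝ)^((l:ℝ)*ω-1))|
            ≤ ∑ x ∈ Finset.Ioo 0 n, |(x:ℝ)^(ω-1)
              * (S ω l (n-x) - cl * ((n-x:ℕ):ℝ)^((l:ℝ)*ω-1))| :=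
              Finset.abs_sum_le_sum_abs _ _
          _ ≤ ∑ x ∈ Finset.Ioo 0 n, (x:ℝ)^(ω-1) * (K * ((n-x:ℕ):ℝ)^(((l:ℝ)-1)*ω-1)) := by
              apply Finset.sum_le_sum
              intro x hx
              simp only [Finset.mem_Ioo] at hx
              rw [abs_mul, abs_of_nonneg (Real.rpow_nonneg (Nat.cast_nonneg x) _)]
              apply mul_le_mul_of_nonneg_left _ (Real.rpow_nonneg (Nat.cast_nonneg x) _)
              exact HK (n-x) (by omega)
          _ = K * ∑ x ∈ Finset.Ioo 0 n, (x:ℝ)^(ω-1) * ((n-x:ℕ):ℝ)^((((l:ℝ)-1)*ω)-1) := by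
              rw [Finset.mul_sum]
              apply Finset.sum_congr rfl
              intro x _
              ring
          _ ≤ K * (K2 * (n:ℝ)^(ω+((l:ℝ)-1)*ω-1)) := by
              apply mul_le_mul_of_nonneg_left (HK2 n hn) hK.le
          _ = K * K2 * (n:ℝ)^((l:ℝ)*ω-1) := by
              rw [show ω+((l:ℝ)-1)*ω-1 = (l:ℝ)*ω-1 by ring]
              ring
      -- main term bound
      have hexp : (n:ℝ)^(ω+(l:ℝ)*ω-1) = (n:ℝ)^(((l:ℝ)+1)*ω-1) := by
        rw [show ω+(l:ℝ)*ω-1 = ((l:ℝ)+1)*ω-1 by ring]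
      have hmain : |cl * (∑ x ∈ Finset.Ioo 0 n, (x:ℝ)^(ω-1) * ((n-x:ℕ):ℝ)^((l:ℝ)*ω-1))
            - Real.Gamma ω ^ (l+1) / Real.Gamma (((l:ℝ)+1) * ω) * (n:ℝ)^(((l:ℝ)+1)*ω-1)|
          ≤ |cl| * K1 * (n:ℝ)^((l:ℝ)*ω-1) := by
        have h1 := HK1 n hn
        have hre : cl * (∑ x ∈ Finset.Ioo 0 n, (x:ℝ)^(ω-1) * ((n-x:ℕ):ℝ)^((l:ℝ)*ω-1))
            - Real.Gamma ω ^ (l+1) / Real.Gamma (((l:ℝ)+1) * ω) * (n:ℝ)^(((l:ℝ)+1)*ω-1)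
            = cl * ((∑ x ∈ Finset.Ioo 0 n, (x:ℝ)^(ω-1) * ((n-x:ℕ):ℝ)^((l:ℝ)*ω-1))
              - (Real.Gamma ω * Real.Gamma ((l:ℝ)*ω) / Real.Gamma (ω+(l:ℝ)*ω))
                  * (n:ℝ)^(ω+(l:ℝ)*ω-1)) := by
          rw [mul_sub, hexp, ← hgam]
          ring
        rw [hre, abs_mul]
        have hcast2 : ((l:ℝ)*ω) - 1 = (l:ℝ)*ω - 1 := rfl
        calc |cl| * |(∑ x ∈ Finset.Ioo 0 n, (x:ℝ)^(ω-1) * ((n-x:ℕ):ℝ)^((l:ℝ)*ω-1))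
              - (Real.Gamma ω * Real.Gamma ((l:ℝ)*ω) / Real.Gamma (ω+(l:ℝ)*ω))
                  * (n:ℝ)^(ω+(l:ℝ)*ω-1)|
            ≤ |cl| * (K1 * (n:ℝ)^((l:ℝ)*ω-1)) := by
              apply mul_le_mul_of_nonneg_left _ (abs_nonneg cl)
              have h2 := h1
              rw [show ω+(l:ℝ)*ω = (l:ℝ)*ω + ω by ring] at h2
              exact h1
          _ = |cl| * K1 * (n:ℝ)^((l:ℝ)*ω-1) := by ring
      -- conclude
      have hgoalcast1 : (((l+1:ℕ)):ℝ) = (l:ℝ)+1 := by push_cast; ring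
      rw [hgoalcast1]
      have hgoalcast2 : (((l:ℝ)+1)-1)*ω-1 = (l:ℝ)*ω-1 := by ring
      rw [hgoalcast2]
      have hfin : S ω (l+1) n - Real.Gamma ω ^ (l+1) / Real.Gamma (((l:ℝ)+1) * ω)
            * (n:ℝ)^(((l:ℝ)+1)*ω-1)
          = (cl * (∑ x ∈ Finset.Ioo 0 n, (x:ℝ)^(ω-1) * ((n-x:ℕ):ℝ)^((l:ℝ)*ω-1))
            - Real.Gamma ω ^ (l+1) / Real.Gamma (((l:ℝ)+1) * ω) * (n:ℝ)^(((l:ℝ)+1)*ω-1))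
            + ∑ x ∈ Finset.Ioo 0 n, (x:ℝ)^(ω-1)
                * (S ω l (n-x) - cl * ((n-x:ℕ):ℝ)^((l:ℝ)*ω-1)) := by
        rw [hdecomp]
        ring
      rw [hfin]
      calc |(cl * (∑ x ∈ Finset.Ioo 0 n, (x:ℝ)^(ω-1) * ((n-x:ℕ):ℝ)^((l:ℝ)*ω-1))
            - Real.Gamma ω ^ (l+1) / Real.Gamma (((l:ℝ)+1) * ω) * (n:ℝ)^(((l:ℝ)+1)*ω-1))
            + ∑ x ∈ Finset.Ioo 0 n, (x:ℝ)^(ω-1)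
                * (S ω l (n-x) - cl * ((n-x:ℕ):ℝ)^((l:ℝ)*ω-1))|
          ≤ |cl * (∑ x ∈ Finset.Ioo 0 n, (x:ℝ)^(ω-1) * ((n-x:ℕ):ℝ)^((l:ℝ)*ω-1))
            - Real.Gamma ω ^ (l+1) / Real.Gamma (((l:ℝ)+1) * ω) * (n:ℝ)^(((l:ℝ)+1)*ω-1)|
            + |∑ x ∈ Finset.Ioo 0 n, (x:ℝ)^(ω-1)
                * (S ω l (n-x) - cl * ((n-x:ℕ):ℝ)^((l:ℝ)*ω-1))| := abs_add_le _ _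
        _ ≤ |cl| * K1 * (n:ℝ)^((l:ℝ)*ω-1) + K * K2 * (n:ℝ)^((l:ℝ)*ω-1) :=
            add_le_add hmain herr
        _ = (|cl| * K1 + K * K2) * (n:ℝ)^((l:ℝ)*ω-1) := by ring

/-- For `ω > 0` and `ℓ ≥ 2`,
`∑_{x₁+⋯+x_ℓ = n, xᵢ ≥ 1} (x₁⋯x_ℓ)^{ω−1}
  = (Γ(ω)^ℓ/Γ(ℓω))·n^{ℓω−1} + O_{ℓ,ω}(n^{(ℓ−1)ω−1})`. -/
theorem power_weighted_composition_sum (ω : ℝ) (hω : 0 < ω) (ℓ : ℕ) (hℓ : 2 ≤ ℓ) :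
    ∃ K : ℝ, 0 < K ∧ ∀ n : ℕ, 1 ≤ n →
      |(∑' v : {v : Fin ℓ → ℕ // (∀ i, 1 ≤ v i) ∧ ∑ i, v i = n},
          ∏ i, ((v.1 i : ℝ) ^ (ω - 1)))
        - Real.Gamma ω ^ ℓ / Real.Gamma ((ℓ : ℝ) * ω) * (n : ℝ) ^ ((ℓ : ℝ) * ω - 1)|
      ≤ K * (n : ℝ) ^ (((ℓ : ℝ) - 1) * ω - 1) := by
  obtain ⟨K, hK, HK⟩ := S_asymp ω hω ℓ hℓ
  refine ⟨K, hK, fun n hn => ?_⟩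
  rw [tsum_eq_S]
  exact HK n hn
end
end

section
/- Let k ≥ 1 and h ≥ h_k* be integers and ω ≥ 1/h a real number. Set h₀ := 2^{k−1} for 1 ≤ k ≤ 11 and h₀ := ⌈k²(2 log k + log log k + 2.5)⌉ − 2 for k ≥ 12, and let ξ = ξ(k) be as in the mean-value estimate ∑_{n≤x} r_{ℙ^k,m}(n)² ≪ x^{2m/k−1}(log x)^ξ valid for all m ≥ h₀. Then for every integer ℓ ≥ 2h₀, ∫_0^1 |T̃(α;x)|^ℓ dα ≪ x^{ℓω−1}(log x)^{ξ+2h₀}. -/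
open Filter MeasureTheory Finset Real
open scoped Topology Nat

noncomputable section

/-- `e(α) = exp(2πiα)`. -/
def eAdd (α : ℝ) : ℂ := Complex.exp (2 * Real.pi * Complex.I * α)

/-- `r_{A,h}(n)`: the number of representations of `n` as an ordered sum of `h`
elements of `A`. -/
def repCount (A : Set ℕ) (h n : ℕ) : ℕ :=
  Set.ncard {v : Fin h → ℕ | (∀ i, v i ∈ A) ∧ ∑ i, v i = n}

/-- `ℙ^k`, the set of `k`-th powers of primes. -/
def PPow (k : ℕ) : Set ℕ := {m | ∃ p : ℕ, p.Prime ∧ p ^ k = m}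

/-- The complete exponential sum `S(a,q) = ∑_{r=1}^q e(a r^k / q)`. -/
def Sgauss (k a q : ℕ) : ℂ := ∑ r ∈ Finset.Icc 1 q, eAdd ((a * r ^ k : ℕ) / (q : ℝ))

/-- `𝔖*_{k,h}(n)`, the singular series of the Waring--Goldbach problem. -/
def singSeriesWG (k h n : ℕ) : ℂ :=
  ∑' q : ℕ, ∑ a ∈ (Finset.Icc 1 q).filter (fun a => Nat.gcd a q = 1),
    Sgauss k a q ^ h / (Nat.totient q : ℂ) ^ h * eAdd (-(((n * a : ℕ) : ℝ) / (q : ℝ)))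

/-- The threshold `h_k^*`. -/
def hkStar (k : ℕ) : ℕ :=
  if k ≤ 11 then 2 ^ k + 1
  else ⌈2 * (k : ℝ) ^ 2 * (2 * Real.log k + Real.log (Real.log k) + 2.5)⌉₊

/-- The Waring--Goldbach modulus `K(k) = ∏_{(p−1)∣k} p^{γ(k,p)}`. -/
def Kk (k : ℕ) : ℕ :=
  ∏ p ∈ (Finset.range (k + 2)).filter (fun p => p.Prime ∧ (p - 1) ∣ k),
    p ^ (if p = 2 ∧ 2 ∣ k then k.factorization 2 + 2 else k.factorization p + 1)

/-- `T(α;x) = ∑_{n≤x, n∈ℙ^k} n^{ω−1/k}(log n)·e(αn)`. -/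
def TP (k : ℕ) (ω : ℝ) (x : ℕ) (α : ℝ) : ℂ :=
  ∑ n ∈ Finset.range (x + 1),
    Set.indicator (PPow k)
      (fun n : ℕ => (((n : ℝ) ^ (ω - 1 / (k : ℝ)) * Real.log n : ℝ) : ℂ) * eAdd (α * n)) n

/-- `T̃(α;x) = ∑_{x/h ≤ n ≤ x, n∈ℙ^k} n^{ω−1/k}(log n)·e(αn)`. -/
def TPtil (k : ℕ) (ω : ℝ) (h x : ℕ) (α : ℝ) : ℂ :=
  ∑ n ∈ Finset.Icc ⌈(x : ℝ) / (h : ℝ)⌉₊ x,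
    Set.indicator (PPow k)
      (fun n : ℕ => (((n : ℝ) ^ (ω - 1 / (k : ℝ)) * Real.log n : ℝ) : ℂ) * eAdd (α * n)) n

/-- The threshold `h₀` of the mean-value estimate. -/
def h0 (k : ℕ) : ℕ :=
  if k ≤ 11 then 2 ^ (k - 1)
  else ⌈(k : ℝ) ^ 2 * (2 * Real.log k + Real.log (Real.log k) + 2.5)⌉₊ - 2

lemma orth (a b : ℕ) :
    (∫ α in (0:ℝ)..1, eAdd (α * a) * (starRingEnd ℂ) (eAdd (α * b)))
      = if a = b then 1 else 0 := by
  have h1 : ∀ α : ℝ, eAdd (α * a) * (starRingEnd ℂ) (eAdd (α * b)) =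
      Complex.exp ((2 * Real.pi * Complex.I * ((a:ℝ) - b)) * α) := by
    intro α
    rw [eAdd, eAdd, ← Complex.exp_conj, ← Complex.exp_add]
    congr 1
    simp only [map_mul, Complex.conj_I, Complex.conj_ofReal, map_ofNat]
    push_cast
    ring
  simp only [h1]
  by_cases hab : a = b
  · subst hab
    simp
  · have hab' : ((a:ℂ) - b) ≠ 0 := by
      rw [sub_ne_zero]
      exact_mod_cast hab
    have hc : (2 * (Real.pi:ℂ) * Complex.I * ((a:ℝ) - b)) ≠ 0 := by
      push_cast
      intro hzero
      rcases mul_eq_zero.mp hzero with h' | h'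
      · rcases mul_eq_zero.mp h' with h'' | h''
        · rcases mul_eq_zero.mp h'' with h3 | h3
          · norm_num at h3
          · exact Real.pi_ne_zero (by exact_mod_cast h3)
        · exact Complex.I_ne_zero h''
      · exact hab' h'
    rw [integral_exp_mul_complex hc]
    have h2 : Complex.exp (2 * Real.pi * Complex.I * ((a:ℝ) - b) * 1) = 1 := by
      rw [mul_one,
        show (2 * (Real.pi:ℂ) * Complex.I * ((a:ℝ) - b) : ℂ)
          = (((a : ℤ) - b : ℤ) : ℂ) * (2 * Real.pi * Complex.I) by push_cast; ring]
      exact Complex.exp_int_mul_two_pi_mul_I _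
    push_cast at h2 ⊢
    rw [mul_one] at h2
    rw [mul_zero, mul_one, h2, Complex.exp_zero, sub_self, zero_div, if_neg hab]

lemma eAdd_cont (n : ℕ) : Continuous fun α : ℝ => eAdd (α * n) := by
  unfold eAdd; fun_prop

lemma eAdd_sum {ι : Type*} (t : Finset ι) (f : ι → ℝ) :
    eAdd (∑ i ∈ t, f i) = ∏ i ∈ t, eAdd (f i) := by
  unfold eAdd
  rw [Complex.ofReal_sum, Finset.mul_sum, Complex.exp_sum]


theorem parseval_bound (m : ℕ) (s : Finset ℕ) (c : ℕ → ℂ) (P : Set ℕ) (W : ℝ)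
    (hW : 0 ≤ W) (hc : ∀ n ∈ s, ‖c n‖ ≤ W) (hP : ∀ n ∈ s, c n ≠ 0 → n ∈ P)
    (X : ℕ) (hs : ∀ n ∈ s, n ≤ X) :
    (∫ α in (0:ℝ)..1, ‖∑ n ∈ s, c n * eAdd (α * n)‖ ^ (2 * m))
      ≤ W ^ (2 * m) * ∑ n ∈ Finset.range (m * X + 1), (repCount P m n : ℝ) ^ 2 := by
  classical
  set g : ℝ → ℂ := fun α => ∑ n ∈ s, c n * eAdd (α * n) with hg
  have hgcont : Continuous g := by
    apply continuous_finset_sum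
    intro n _
    exact continuous_const.mul (eAdd_cont n)
  set B := Fintype.piFinset (fun _ : Fin m => s) with hB
  set S : (Fin m → ℕ) → ℕ := fun v => ∑ i, v i with hS
  set A : (Fin m → ℕ) → ℂ := fun v => ∏ i, c (v i) with hA
  -- expansion of g^m
  have hexp : ∀ α : ℝ, g α ^ m = ∑ v ∈ B, A v * eAdd (α * S v) := by
    intro α
    have : g α ^ m = ∏ _i : Fin m, g α := by
      rw [Finset.prod_const, Finset.card_univ, Fintype.card_fin]
    rw [this, hg, Finset.prod_univ_sum]
    refine Finset.sum_congr rfl fun v _ => ?_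
    rw [Finset.prod_mul_distrib]
    congr 1
    rw [← eAdd_sum]
    congr 1
    push_cast [hS]
    rw [Finset.mul_sum]
  -- the (complex) integral identity
  have hint : (∫ α in (0:ℝ)..1, g α ^ m * (starRingEnd ℂ) (g α ^ m))
      = ∑ v ∈ B, ∑ w ∈ B, (A v * (starRingEnd ℂ) (A w)) * (if S v = S w then 1 else 0) := by
    have h1 : ∀ α : ℝ, g α ^ m * (starRingEnd ℂ) (g α ^ m)
        = ∑ v ∈ B, ∑ w ∈ B,
            (A v * (starRingEnd ℂ) (A w)) * (eAdd (α * S v) * (starRingEnd ℂ) (eAdd (α * S w))) := by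
      intro α
      rw [hexp α, map_sum, Finset.sum_mul_sum]
      refine Finset.sum_congr rfl fun v _ => Finset.sum_congr rfl fun w _ => ?_
      rw [map_mul]
      ring
    simp only [h1]
    rw [intervalIntegral.integral_finset_sum]
    · refine Finset.sum_congr rfl fun v _ => ?_
      rw [intervalIntegral.integral_finset_sum]
      · refine Finset.sum_congr rfl fun w _ => ?_
        rw [intervalIntegral.integral_const_mul, orth]
      · intro w _
        apply Continuous.intervalIntegrable
        exact continuous_const.mul ((eAdd_cont (S v)).mul (continuous_star.comp (eAdd_cont (S w))))
    · intro v _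
      apply Continuous.intervalIntegrable
      apply continuous_finset_sum
      intro w _
      exact continuous_const.mul ((eAdd_cont (S v)).mul (continuous_star.comp (eAdd_cont (S w))))
  -- LHS equals the real part of the complex integral
  have hre : (∫ α in (0:ℝ)..1, ‖g α‖ ^ (2 * m))
      = (∫ α in (0:ℝ)..1, g α ^ m * (starRingEnd ℂ) (g α ^ m)).re := by
    have h2 : ∀ α : ℝ, ‖g α‖ ^ (2 * m) = (g α ^ m * (starRingEnd ℂ) (g α ^ m)).re := by
      intro α
      rw [Complex.mul_conj, Complex.normSq_eq_norm_sq, norm_pow,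
        Complex.ofReal_re, ← pow_mul, mul_comm m 2]
    simp only [h2]
    rw [← Complex.reCLM_apply, ← ContinuousLinearMap.intervalIntegral_comp_comm]
    · rfl
    · apply Continuous.intervalIntegrable
      exact (hgcont.pow m).mul (continuous_star.comp (hgcont.pow m))
  -- termwise bound on coefficients
  set ind : (Fin m → ℕ) → ℝ := fun v => if (∀ i, v i ∈ P) then 1 else 0 with hind
  have hind_nonneg : ∀ v, 0 ≤ ind v := by
    intro v; rw [hind]; dsimp only; split <;> norm_num
  have hAbound : ∀ v ∈ B, ‖A v‖ ≤ W ^ m * ind v := by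
    intro v hv
    rw [hB, Fintype.mem_piFinset] at hv
    by_cases hall : ∀ i, v i ∈ P
    · rw [hind]; dsimp only; rw [if_pos hall, mul_one, hA]
      calc ‖∏ i, c (v i)‖ = ∏ i, ‖c (v i)‖ := by rw [norm_prod]
        _ ≤ ∏ _i : Fin m, W :=
            Finset.prod_le_prod (fun i _ => norm_nonneg _) (fun i _ => hc _ (hv i))
        _ = W ^ m := by rw [Finset.prod_const, Finset.card_univ, Fintype.card_fin]
    · push_neg at hall
      obtain ⟨i, hi⟩ := hall
      have hc0 : c (v i) = 0 := by
        by_contra h0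
        exact hi (hP _ (hv i) h0)
      have hA0 : A v = 0 := Finset.prod_eq_zero (Finset.mem_univ i) hc0
      rw [hA0, hind]; dsimp only
      rw [if_neg (fun h => hi (h i)), mul_zero, norm_zero]
  -- bound the integral by a weighted count
  have hsum1 : (∫ α in (0:ℝ)..1, ‖g α‖ ^ (2 * m))
      ≤ ∑ v ∈ B, ∑ w ∈ B, (if S v = S w then W ^ (2 * m) * (ind v * ind w) else 0) := by
    rw [hre, hint]
    calc (∑ v ∈ B, ∑ w ∈ B, (A v * (starRingEnd ℂ) (A w)) * (if S v = S w then 1 else 0)).re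
        ≤ ‖∑ v ∈ B, ∑ w ∈ B, (A v * (starRingEnd ℂ) (A w)) * (if S v = S w then 1 else 0)‖ :=
          Complex.re_le_norm _
      _ ≤ ∑ v ∈ B, ‖∑ w ∈ B, (A v * (starRingEnd ℂ) (A w)) * (if S v = S w then 1 else 0)‖ :=
          norm_sum_le _ _
      _ ≤ ∑ v ∈ B, ∑ w ∈ B, (if S v = S w then W ^ (2 * m) * (ind v * ind w) else 0) := by
          refine Finset.sum_le_sum fun v hv => ?_
          refine le_trans (norm_sum_le _ _) (Finset.sum_le_sum fun w hw => ?_)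
          by_cases hvw : S v = S w
          · rw [if_pos hvw, if_pos hvw, mul_one, norm_mul, RCLike.norm_conj]
            calc ‖A v‖ * ‖A w‖ ≤ (W ^ m * ind v) * (W ^ m * ind w) :=
                  mul_le_mul (hAbound v hv) (hAbound w hw) (norm_nonneg _)
                    (mul_nonneg (pow_nonneg hW m) (hind_nonneg v))
              _ = W ^ (2 * m) * (ind v * ind w) := by rw [two_mul, pow_add]; ring
          · rw [if_neg hvw, if_neg hvw, mul_zero, norm_zero]
  -- counting
  set R : ℕ → ℕ := fun n => (B.filter (fun w => S w = n ∧ ∀ i, w i ∈ P)).card with hR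
  have hinner : ∀ n : ℕ, (∑ w ∈ B, if S w = n then ind w else 0) = (R n : ℝ) := by
    intro n
    rw [← Finset.sum_filter, hind]
    dsimp only
    rw [Finset.sum_boole, Finset.filter_filter, hR]
  have hmaps : ∀ v ∈ B, S v ∈ Finset.range (m * X + 1) := by
    intro v hv
    rw [Finset.mem_range, Nat.lt_succ_iff, hS]
    rw [hB, Fintype.mem_piFinset] at hv
    calc ∑ i, v i ≤ ∑ _i : Fin m, X := Finset.sum_le_sum (fun i _ => hs _ (hv i))
      _ = m * X := by rw [Finset.sum_const, Finset.card_univ, Fintype.card_fin, smul_eq_mul]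
  have hcount : (∑ v ∈ B, ∑ w ∈ B, (if S v = S w then ind v * ind w else 0))
      = ∑ n ∈ Finset.range (m * X + 1), (R n : ℝ) ^ 2 := by
    have step1 : ∀ v, (∑ w ∈ B, if S v = S w then ind v * ind w else 0)
        = ind v * (R (S v) : ℝ) := by
      intro v
      rw [← hinner (S v), Finset.mul_sum]
      refine Finset.sum_congr rfl fun w _ => ?_
      by_cases hsw : S w = S v
      · rw [if_pos hsw.symm, if_pos hsw]
      · rw [if_neg (fun h => hsw h.symm), if_neg hsw, mul_zero]
    simp only [step1]
    rw [← Finset.sum_fiberwise_of_maps_to hmaps (fun v => ind v * (R (S v) : ℝ))]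
    refine Finset.sum_congr rfl fun n hn => ?_
    rw [Finset.sum_congr rfl (fun v hv => by
      rw [(Finset.mem_filter.mp hv).2] :
        ∀ v ∈ B.filter (fun v => S v = n), ind v * (R (S v) : ℝ) = ind v * (R n : ℝ)),
      ← Finset.sum_mul]
    have hsf : (∑ v ∈ B.filter (fun v => S v = n), ind v) = (R n : ℝ) := by
      rw [Finset.sum_filter, hinner n]
    rw [hsf]; ring
  have hRle : ∀ n : ℕ, (R n : ℝ) ≤ (repCount P m n : ℝ) := by
    intro n
    have hfin : {v : Fin m → ℕ | (∀ i, v i ∈ P) ∧ ∑ i, v i = n}.Finite := by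
      apply Set.Finite.subset (Set.finite_Icc (fun _ : Fin m => 0) (fun _ => n))
      intro v hv
      refine Set.mem_Icc.mpr ⟨Pi.le_def.mpr fun i => Nat.zero_le _, Pi.le_def.mpr fun i => ?_⟩
      calc v i ≤ ∑ j, v j := Finset.single_le_sum (fun j _ => Nat.zero_le _) (Finset.mem_univ i)
        _ = n := hv.2
    have hsub : ↑(B.filter (fun w => S w = n ∧ ∀ i, w i ∈ P))
        ⊆ {v : Fin m → ℕ | (∀ i, v i ∈ P) ∧ ∑ i, v i = n} := by
      intro v hv
      simp only [Finset.coe_filter, Set.mem_setOf_eq] at hv ⊢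
      exact ⟨hv.2.2, hv.2.1⟩
    have hle := Set.ncard_le_ncard hsub hfin
    rw [Set.ncard_coe_finset] at hle
    unfold repCount
    exact_mod_cast hle
  calc (∫ α in (0:ℝ)..1, ‖g α‖ ^ (2 * m))
      ≤ ∑ v ∈ B, ∑ w ∈ B, (if S v = S w then W ^ (2 * m) * (ind v * ind w) else 0) := hsum1
    _ = W ^ (2 * m) * ∑ v ∈ B, ∑ w ∈ B, (if S v = S w then ind v * ind w else 0) := by
        rw [Finset.mul_sum]
        refine Finset.sum_congr rfl fun v _ => ?_
        rw [Finset.mul_sum]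
        refine Finset.sum_congr rfl fun w _ => ?_
        by_cases h' : S v = S w <;> simp [h']
    _ = W ^ (2 * m) * ∑ n ∈ Finset.range (m * X + 1), (R n : ℝ) ^ 2 := by rw [hcount]
    _ ≤ W ^ (2 * m) * ∑ n ∈ Finset.range (m * X + 1), (repCount P m n : ℝ) ^ 2 := by
        refine mul_le_mul_of_nonneg_left ?_ (pow_nonneg hW _)
        exact Finset.sum_le_sum fun n _ =>
          pow_le_pow_left₀ (Nat.cast_nonneg _) (hRle n) 2


def coefP (k : ℕ) (ω : ℝ) : ℕ → ℂ := fun n =>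
  Set.indicator (PPow k)
    (fun n : ℕ => (((n : ℝ) ^ (ω - 1 / (k : ℝ)) * Real.log n : ℝ) : ℂ)) n

lemma eAdd_norm (t : ℝ) : ‖eAdd t‖ = 1 := by
  rw [eAdd, Complex.norm_exp]
  have : (2 * (Real.pi:ℂ) * Complex.I * t).re = 0 := by
    simp [Complex.mul_re, Complex.mul_im]
  rw [this, Real.exp_zero]

lemma TPtil_eq (k : ℕ) (ω : ℝ) (h x : ℕ) (α : ℝ) :
    TPtil k ω h x α
      = ∑ n ∈ Finset.Icc ⌈(x : ℝ) / (h : ℝ)⌉₊ x, coefP k ω n * eAdd (α * n) := by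
  unfold TPtil coefP
  refine Finset.sum_congr rfl fun n _ => ?_
  by_cases hn : n ∈ PPow k
  · rw [Set.indicator_of_mem hn, Set.indicator_of_mem hn]
  · rw [Set.indicator_of_notMem hn, Set.indicator_of_notMem hn, zero_mul]

lemma coefP_ne_zero (k : ℕ) (ω : ℝ) (n : ℕ) (h : coefP k ω n ≠ 0) : n ∈ PPow k := by
  by_contra hn
  exact h (Set.indicator_of_notMem hn _)

lemma two_le_of_mem_PPow {k n : ℕ} (hk : 1 ≤ k) (hn : n ∈ PPow k) : 2 ≤ n := by
  obtain ⟨p, hp, rfl⟩ := hn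
  calc 2 ≤ p := hp.two_le
    _ ≤ p ^ k := Nat.le_self_pow (by omega) p

/-- key pointwise bound with `log n` kept. -/
lemma coefP_norm_le' (k h : ℕ) (hk : 1 ≤ k) (hh : 1 ≤ h) (ω : ℝ) (hω : 0 < ω)
    (x : ℕ) (hx : 2 ≤ x) (n : ℕ) (hn : n ∈ Finset.Icc ⌈(x : ℝ) / (h : ℝ)⌉₊ x) :
    ‖coefP k ω n‖ ≤ ((h : ℝ) * (x : ℝ) ^ (ω - 1 / (k : ℝ))) * Real.log n := by
  rw [Finset.mem_Icc] at hn
  have hx0 : (0:ℝ) < x := by positivity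
  have hh0 : (0:ℝ) < h := by exact_mod_cast hh
  have hxe : (0:ℝ) < (x:ℝ) ^ (ω - 1 / (k : ℝ)) := Real.rpow_pos_of_pos hx0 _
  by_cases hmem : n ∈ PPow k
  · have hn2 : 2 ≤ n := two_le_of_mem_PPow hk hmem
    have hn0 : (0:ℝ) < n := by exact_mod_cast (by omega : 0 < n)
    have hlogn : 0 ≤ Real.log n := Real.log_nonneg (by exact_mod_cast (by omega : 1 ≤ n))
    rw [coefP, Set.indicator_of_mem hmem, Complex.norm_real, Real.norm_eq_abs, abs_of_nonneg
      (mul_nonneg (Real.rpow_nonneg (le_of_lt hn0) _) hlogn)]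
    refine mul_le_mul_of_nonneg_right ?_ hlogn
    rcases le_or_gt (1 / (k:ℝ)) ω with hcase | hcase
    · calc (n:ℝ) ^ (ω - 1/(k:ℝ)) ≤ (x:ℝ) ^ (ω - 1/(k:ℝ)) :=
          Real.rpow_le_rpow (le_of_lt hn0) (by exact_mod_cast hn.2) (by linarith)
        _ ≤ (h:ℝ) * (x:ℝ) ^ (ω - 1/(k:ℝ)) := le_mul_of_one_le_left (le_of_lt hxe) (by exact_mod_cast hh)
    · have hquot : (x:ℝ) / h ≤ n := le_trans (Nat.le_ceil _) (by exact_mod_cast hn.1)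
      have hq0 : (0:ℝ) < (x:ℝ)/h := by positivity
      calc (n:ℝ) ^ (ω - 1/(k:ℝ)) ≤ ((x:ℝ)/h) ^ (ω - 1/(k:ℝ)) :=
            Real.rpow_le_rpow_of_nonpos hq0 hquot (by linarith)
        _ = (x:ℝ) ^ (ω - 1/(k:ℝ)) / (h:ℝ) ^ (ω - 1/(k:ℝ)) :=
            Real.div_rpow (le_of_lt hx0) (le_of_lt hh0) _
        _ = (x:ℝ) ^ (ω - 1/(k:ℝ)) * (h:ℝ) ^ (1/(k:ℝ) - ω) := by
            rw [div_eq_mul_inv, ← Real.rpow_neg (le_of_lt hh0), neg_sub]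
        _ ≤ (x:ℝ) ^ (ω - 1/(k:ℝ)) * (h:ℝ) ^ (1:ℝ) := by
            refine mul_le_mul_of_nonneg_left ?_ (le_of_lt hxe)
            refine Real.rpow_le_rpow_of_exponent_le (by exact_mod_cast hh) ?_
            have h1k : 1/(k:ℝ) ≤ 1 := by
              rw [div_le_one (by exact_mod_cast hk : (0:ℝ) < k)]
              exact_mod_cast hk
            linarith
        _ = (h:ℝ) * (x:ℝ) ^ (ω - 1/(k:ℝ)) := by rw [Real.rpow_one, mul_comm]
  · rw [coefP, Set.indicator_of_notMem hmem, norm_zero]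
    have : (0:ℝ) ≤ Real.log n := by
      rcases Nat.eq_zero_or_pos n with h0 | h1
      · simp [h0]
      · exact Real.log_nonneg (by exact_mod_cast h1)
    positivity

lemma coefP_norm_le (k h : ℕ) (hk : 1 ≤ k) (hh : 1 ≤ h) (ω : ℝ) (hω : 0 < ω)
    (x : ℕ) (hx : 2 ≤ x) (n : ℕ) (hn : n ∈ Finset.Icc ⌈(x : ℝ) / (h : ℝ)⌉₊ x) :
    ‖coefP k ω n‖ ≤ (h : ℝ) * (x : ℝ) ^ (ω - 1 / (k : ℝ)) * Real.log x := by
  refine le_trans (coefP_norm_le' k h hk hh ω hω x hx n hn) ?_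
  have hx0 : (0:ℝ) < x := by positivity
  refine mul_le_mul_of_nonneg_left ?_ (by positivity)
  rcases Nat.eq_zero_or_pos n with h0 | h1
  · simp [h0]
    exact Real.log_nonneg (by exact_mod_cast (by omega : 1 ≤ x))
  · exact Real.log_le_log (by exact_mod_cast h1)
      (by exact_mod_cast (Finset.mem_Icc.mp hn).2)

lemma pow_k_mem_PPow_iff {k p : ℕ} (hk : 1 ≤ k) : p ^ k ∈ PPow k ↔ p.Prime := by
  constructor
  · rintro ⟨q, hq, hqe⟩
    have : q = p := Nat.pow_left_injective (by omega) hqe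
    rwa [← this]
  · intro hp
    exact ⟨p, hp, rfl⟩

lemma sup_bound (k h : ℕ) (hk : 1 ≤ k) (hh : 1 ≤ h) (ω : ℝ) (hω : 0 < ω)
    (x : ℕ) (hx : 2 ≤ x) (α : ℝ) :
    ‖TPtil k ω h x α‖ ≤ ((h : ℝ) * k * Real.log 4) * (x : ℝ) ^ ω := by
  classical
  have hx0 : (0:ℝ) < x := by positivity
  have hk0 : (0:ℝ) < k := by exact_mod_cast hk
  set e : ℝ := ω - 1/(k:ℝ) with he
  set N := ⌈(x : ℝ) / (h : ℝ)⌉₊ with hN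
  set f : ℕ → ℝ := fun n => if n ∈ Finset.Icc N x then ‖coefP k ω n‖ else 0 with hf
  have hf_nonneg : ∀ n, 0 ≤ f n := by
    intro n; rw [hf]; dsimp only; split
    · exact norm_nonneg _
    · exact le_refl 0
  -- step 1: bound by the sum of coefficient norms
  have h1 : ‖TPtil k ω h x α‖ ≤ ∑ n ∈ Finset.Icc N x, f n := by
    rw [TPtil_eq]
    refine le_trans (norm_sum_le _ _) (Finset.sum_le_sum fun n hn => ?_)
    rw [norm_mul, eAdd_norm, mul_one, hf]
    dsimp only
    rw [if_pos hn]
  -- step 2: reindex over the k-th roots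
  set t := (Finset.range (x+1)).filter (fun p => p ^ k ≤ x) with ht
  have h2 : ∑ n ∈ Finset.Icc N x, f n ≤ ∑ p ∈ t, f (p ^ k) := by
    have himg : ∑ n ∈ t.image (fun p => p ^ k), f n = ∑ p ∈ t, f (p ^ k) :=
      Finset.sum_image (fun p _ q _ hpq => Nat.pow_left_injective (by omega) hpq)
    rw [← himg, ← Finset.sum_filter_ne_zero (Finset.Icc N x) (f := f)]
    refine Finset.sum_le_sum_of_subset_of_nonneg ?_ (fun n _ _ => hf_nonneg n)
    intro n hn
    rw [Finset.mem_filter] at hn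
    obtain ⟨hmem, hne⟩ := hn
    have hPP : n ∈ PPow k := by
      apply coefP_ne_zero k ω n
      intro h0
      apply hne
      rw [hf]; dsimp only; rw [if_pos hmem, h0, norm_zero]
    obtain ⟨p, hp, rfl⟩ := hPP
    have hpx : p ^ k ≤ x := (Finset.mem_Icc.mp hmem).2
    rw [Finset.mem_image]
    refine ⟨p, ?_, rfl⟩
    rw [ht, Finset.mem_filter, Finset.mem_range]
    have hple : p ≤ p ^ k := Nat.le_self_pow (by omega) p
    exact ⟨by omega, hpx⟩
  -- step 3: termwise bound by log p
  have h3 : ∑ p ∈ t, f (p ^ k) ≤ ∑ p ∈ t,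
      (if p.Prime then ((h:ℝ) * (x:ℝ) ^ e * k) * Real.log p else 0) := by
    refine Finset.sum_le_sum fun p hp => ?_
    by_cases hprime : p.Prime
    · rw [if_pos hprime]
      by_cases hmem : p ^ k ∈ Finset.Icc N x
      · rw [hf]; dsimp only; rw [if_pos hmem]
        refine le_trans (coefP_norm_le' k h hk hh ω hω x hx _ hmem) ?_
        have : Real.log ((p:ℝ) ^ (k:ℕ)) = k * Real.log p := by rw [Real.log_pow]
        rw [show ((p ^ k : ℕ) : ℝ) = (p:ℝ) ^ (k:ℕ) by push_cast; ring, this]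
        have hlogp : 0 ≤ Real.log p := Real.log_nonneg (by exact_mod_cast hprime.one_lt.le)
        calc (h:ℝ) * (x:ℝ) ^ e * ((k:ℝ) * Real.log p)
            = ((h:ℝ) * (x:ℝ) ^ e * k) * Real.log p := by ring
          _ ≤ _ := le_refl _
      · rw [hf]; dsimp only; rw [if_neg hmem]
        have hlogp : 0 ≤ Real.log p := Real.log_nonneg (by exact_mod_cast hprime.one_lt.le)
        have hxe : (0:ℝ) ≤ (x:ℝ) ^ e := Real.rpow_nonneg (le_of_lt hx0) _
        positivity
    · rw [if_neg hprime, hf]; dsimp only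
      have : coefP k ω (p ^ k) = 0 := by
        rw [coefP, Set.indicator_of_notMem]
        intro hc
        exact hprime ((pow_k_mem_PPow_iff hk).mp hc)
      split
      · rw [this, norm_zero]
      · exact le_refl 0
  -- step 4: Chebyshev bound
  set y := ⌊(x : ℝ) ^ ((k:ℝ)⁻¹)⌋₊ with hy
  have h4 : ∑ p ∈ t, (if p.Prime then ((h:ℝ) * (x:ℝ) ^ e * k) * Real.log p else 0)
      ≤ ((h:ℝ) * (x:ℝ) ^ e * k) * ((y : ℝ) * Real.log 4) := by
    rw [← Finset.sum_filter, ← Finset.mul_sum]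
    have hC : (0:ℝ) ≤ (h:ℝ) * (x:ℝ) ^ e * k := by positivity
    refine mul_le_mul_of_nonneg_left ?_ hC
    have hsub : t.filter Nat.Prime ⊆ (Finset.range (y+1)).filter Nat.Prime := by
      intro p hp
      rw [Finset.mem_filter] at hp ⊢
      obtain ⟨hpt, hprime⟩ := hp
      rw [ht, Finset.mem_filter] at hpt
      refine ⟨Finset.mem_range.mpr ?_, hprime⟩
      have hpk : ((p:ℝ)) ^ (k:ℕ) ≤ (x:ℝ) := by exact_mod_cast hpt.2
      have : (p:ℝ) ≤ (x:ℝ) ^ ((k:ℝ)⁻¹) := by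
        have h5 : ((p:ℝ) ^ (k:ℕ)) ^ ((k:ℝ)⁻¹) ≤ (x:ℝ) ^ ((k:ℝ)⁻¹) :=
          Real.rpow_le_rpow (by positivity) hpk (by positivity)
        rwa [← Real.rpow_natCast (p:ℝ) k, ← Real.rpow_mul (Nat.cast_nonneg p),
          mul_inv_cancel₀ (ne_of_gt hk0), Real.rpow_one] at h5
      have := Nat.le_floor this
      omega
    calc ∑ p ∈ t.filter Nat.Prime, Real.log p
        ≤ ∑ p ∈ (Finset.range (y+1)).filter Nat.Prime, Real.log p := by
          refine Finset.sum_le_sum_of_subset_of_nonneg hsub fun p hp _ => ?_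
          rw [Finset.mem_filter] at hp
          exact Real.log_nonneg (by exact_mod_cast hp.2.one_lt.le)
      _ = Real.log (primorial y) := by
          rw [primorial, Nat.cast_prod, Real.log_prod]
          · intro p hp
            rw [Finset.mem_filter] at hp
            exact_mod_cast hp.2.pos.ne'
      _ ≤ Real.log (4 ^ y) := by
          refine Real.log_le_log ?_ ?_
          · exact_mod_cast primorial_pos y
          · exact_mod_cast primorial_le_4_pow y
      _ = (y : ℝ) * Real.log 4 := by
          rw [Real.log_pow]
  -- step 5: final assembly
  have h5 : (y : ℝ) ≤ (x:ℝ) ^ ((k:ℝ)⁻¹) := Nat.floor_le (by positivity)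
  calc ‖TPtil k ω h x α‖ ≤ ∑ n ∈ Finset.Icc N x, f n := h1
    _ ≤ ∑ p ∈ t, f (p ^ k) := h2
    _ ≤ _ := h3
    _ ≤ ((h:ℝ) * (x:ℝ) ^ e * k) * ((y : ℝ) * Real.log 4) := h4
    _ ≤ ((h:ℝ) * (x:ℝ) ^ e * k) * ((x:ℝ) ^ ((k:ℝ)⁻¹) * Real.log 4) := by
        refine mul_le_mul_of_nonneg_left (mul_le_mul_of_nonneg_right h5 ?_) (by positivity)
        exact Real.log_nonneg (by norm_num)
    _ = ((h : ℝ) * k * Real.log 4) * ((x:ℝ) ^ e * (x:ℝ) ^ ((k:ℝ)⁻¹)) := by ring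
    _ = ((h : ℝ) * k * Real.log 4) * (x : ℝ) ^ ω := by
        rw [← Real.rpow_add hx0, he]
        congr 2
        field_simp
        ring



lemma even_moment (k h : ℕ) (hk : 1 ≤ k) (hh : 1 ≤ h) (ω : ℝ) (hω : 0 < ω) (ξ : ℝ)
    (m : ℕ) (hm : 1 ≤ m) (K0 : ℝ) (hK0 : 0 < K0)
    (hmv : ∀ x : ℝ, 2 ≤ x →
      ∑ n ∈ Finset.range (⌊x⌋₊ + 1), (repCount (PPow k) m n : ℝ) ^ 2
        ≤ K0 * x ^ (2 * (m : ℝ) / (k : ℝ) - 1) * Real.log x ^ ξ) :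
    ∃ K : ℝ, 0 < K ∧ ∀ x : ℕ, 2 ≤ x →
      (∫ α in (0:ℝ)..1, ‖TPtil k ω h x α‖ ^ (2 * m))
        ≤ K * (x : ℝ) ^ (2 * (m : ℝ) * ω - 1) * Real.log x ^ (ξ + 2 * (m : ℝ)) := by
  have hm0 : (0:ℝ) < m := by exact_mod_cast hm
  set q : ℝ := 2 * (m : ℝ) / (k : ℝ) - 1 with hq
  set Cξ : ℝ := max 1 ((1 + Real.log m / Real.log 2) ^ ξ) with hCξ
  have hCξ1 : (1:ℝ) ≤ Cξ := le_max_left _ _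
  have hCξ0 : (0:ℝ) < Cξ := lt_of_lt_of_le one_pos hCξ1
  refine ⟨(h:ℝ) ^ (2*m) * (m:ℝ) ^ q * K0 * Cξ, by positivity, ?_⟩
  intro x hx
  have hx0 : (0:ℝ) < x := by positivity
  have hx1 : (1:ℝ) < x := by exact_mod_cast hx
  have hlx : (0:ℝ) < Real.log x := Real.log_pos hx1
  set e : ℝ := ω - 1/(k:ℝ) with he
  set W : ℝ := (h:ℝ) * (x:ℝ) ^ e * Real.log x with hW
  have hW0 : 0 ≤ W := by
    rw [hW]
    have := Real.rpow_nonneg hx0.le e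
    positivity
  set N := ⌈(x : ℝ) / (h : ℝ)⌉₊ with hN
  -- Parseval step
  have hpar : (∫ α in (0:ℝ)..1, ‖TPtil k ω h x α‖ ^ (2 * m))
      ≤ W ^ (2*m) * ∑ n ∈ Finset.range (m * x + 1), (repCount (PPow k) m n : ℝ) ^ 2 := by
    have heq : (∫ α in (0:ℝ)..1, ‖TPtil k ω h x α‖ ^ (2 * m))
        = ∫ α in (0:ℝ)..1, ‖∑ n ∈ Finset.Icc N x, coefP k ω n * eAdd (α * n)‖ ^ (2 * m) := by
      simp only [TPtil_eq, hN]
    rw [heq]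
    exact parseval_bound m (Finset.Icc N x) (coefP k ω) (PPow k) W hW0
      (fun n hn => coefP_norm_le k h hk hh ω hω x hx n hn)
      (fun n _ hne => coefP_ne_zero k ω n hne)
      x (fun n hn => (Finset.mem_Icc.mp hn).2)
  -- mean value estimate at m*x
  have hmx2 : (2:ℝ) ≤ ((m * x : ℕ) : ℝ) := by
    have : 2 ≤ m * x := le_trans (by omega) (Nat.mul_le_mul hm (le_refl x))
    exact_mod_cast this
  have hmv' : ∑ n ∈ Finset.range (m * x + 1), (repCount (PPow k) m n : ℝ) ^ 2
      ≤ K0 * ((m:ℝ) * x) ^ q * Real.log ((m:ℝ) * x) ^ ξ := by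
    have := hmv ((m * x : ℕ) : ℝ) hmx2
    rw [Nat.floor_natCast] at this
    rw [show (((m * x : ℕ)) : ℝ) = (m:ℝ) * x by push_cast; ring] at this
    exact this
  -- log comparison
  have hlogmx : Real.log ((m:ℝ) * x) ^ ξ ≤ Cξ * Real.log x ^ ξ := by
    have hlm : 0 ≤ Real.log m := Real.log_nonneg (by exact_mod_cast hm)
    have hl2 : 0 < Real.log 2 := Real.log_pos (by norm_num)
    have hl2x : Real.log 2 ≤ Real.log x := Real.log_le_log (by norm_num) (by exact_mod_cast hx)
    have hlmx : Real.log ((m:ℝ) * x) = Real.log m + Real.log x :=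
      Real.log_mul (ne_of_gt hm0) (ne_of_gt hx0)
    rcases le_or_gt 0 ξ with hξ | hξ
    · have hb : Real.log ((m:ℝ) * x) ≤ (1 + Real.log m / Real.log 2) * Real.log x := by
        rw [hlmx]
        have : Real.log m = (Real.log m / Real.log 2) * Real.log 2 := by
          field_simp
        nlinarith [div_nonneg hlm hl2.le]
      calc Real.log ((m:ℝ) * x) ^ ξ ≤ ((1 + Real.log m / Real.log 2) * Real.log x) ^ ξ :=
            Real.rpow_le_rpow (by rw [hlmx]; linarith) hb hξ
        _ = (1 + Real.log m / Real.log 2) ^ ξ * Real.log x ^ ξ :=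
            Real.mul_rpow (by positivity) hlx.le
        _ ≤ Cξ * Real.log x ^ ξ := by
            refine mul_le_mul_of_nonneg_right (le_max_right _ _) ?_
            exact Real.rpow_nonneg hlx.le _
    · have hxb : Real.log x ≤ Real.log ((m:ℝ) * x) := by rw [hlmx]; linarith
      calc Real.log ((m:ℝ) * x) ^ ξ ≤ Real.log x ^ ξ :=
            Real.rpow_le_rpow_of_nonpos hlx hxb hξ.le
        _ ≤ Cξ * Real.log x ^ ξ :=
            le_mul_of_one_le_left (Real.rpow_nonneg hlx.le _) hCξ1
  -- power algebra
  have hxpow : ((x:ℝ) ^ e) ^ (2*m) * (x:ℝ) ^ q = (x:ℝ) ^ (2 * (m:ℝ) * ω - 1) := by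
    rw [← Real.rpow_natCast ((x:ℝ) ^ e) (2*m), ← Real.rpow_mul hx0.le, ← Real.rpow_add hx0]
    congr 1
    rw [he, hq]
    push_cast
    ring
  have hlogpow : (Real.log x) ^ (2*m) * Real.log x ^ ξ = Real.log x ^ (ξ + 2 * (m:ℝ)) := by
    rw [← Real.rpow_natCast (Real.log x) (2*m), ← Real.rpow_add hlx]
    congr 1
    push_cast
    ring
  calc (∫ α in (0:ℝ)..1, ‖TPtil k ω h x α‖ ^ (2 * m))
      ≤ W ^ (2*m) * ∑ n ∈ Finset.range (m * x + 1), (repCount (PPow k) m n : ℝ) ^ 2 := hpar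
    _ ≤ W ^ (2*m) * (K0 * ((m:ℝ) * x) ^ q * Real.log ((m:ℝ) * x) ^ ξ) :=
        mul_le_mul_of_nonneg_left hmv' (pow_nonneg hW0 _)
    _ ≤ W ^ (2*m) * (K0 * ((m:ℝ) * x) ^ q * (Cξ * Real.log x ^ ξ)) := by
        refine mul_le_mul_of_nonneg_left (mul_le_mul_of_nonneg_left hlogmx ?_) (pow_nonneg hW0 _)
        have := Real.rpow_nonneg (by positivity : (0:ℝ) ≤ (m:ℝ) * x) q
        positivity
    _ = (h:ℝ) ^ (2*m) * (m:ℝ) ^ q * K0 * Cξ * (x:ℝ) ^ (2 * (m:ℝ) * ω - 1)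
          * Real.log x ^ (ξ + 2 * (m:ℝ)) := by
        rw [hW, mul_pow, mul_pow, Real.mul_rpow hm0.le hx0.le, ← hxpow, ← hlogpow]
        ring


lemma inner_ge (k : ℕ) (hk : 12 ≤ k) :
    (2.5 : ℝ) ≤ 2 * Real.log k + Real.log (Real.log k) + 2.5 := by
  have hk12 : (12:ℝ) ≤ (k:ℝ) := by exact_mod_cast hk
  have hk1 : (1:ℝ) ≤ Real.log k := by
    rw [Real.le_log_iff_exp_le (by linarith)]
    calc Real.exp 1 ≤ 2.7182818286 := le_of_lt Real.exp_one_lt_d9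
      _ ≤ (k:ℝ) := by linarith
  have h2 : 0 ≤ Real.log (Real.log k) := Real.log_nonneg hk1
  linarith

lemma one_le_h0 (k : ℕ) (hk : 1 ≤ k) : 1 ≤ h0 k := by
  rw [h0]
  split
  · exact Nat.one_le_two_pow
  · rename_i hk11
    push_neg at hk11
    have hk12 : 12 ≤ k := by omega
    have hk12' : (12:ℝ) ≤ (k:ℝ) := by exact_mod_cast hk12
    have h3 : (3:ℝ) ≤ (k : ℝ) ^ 2 * (2 * Real.log k + Real.log (Real.log k) + 2.5) := by
      nlinarith [inner_ge k hk12]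
    have hceil : 3 ≤ ⌈(k : ℝ) ^ 2 * (2 * Real.log k + Real.log (Real.log k) + 2.5)⌉₊ := by
      have h4 := Nat.le_ceil ((k : ℝ) ^ 2 * (2 * Real.log k + Real.log (Real.log k) + 2.5))
      exact_mod_cast le_trans h3 h4
    omega

lemma one_le_hkStar (k : ℕ) (hk : 1 ≤ k) : 1 ≤ hkStar k := by
  rw [hkStar]
  split
  · exact Nat.le_add_left 1 _
  · rename_i hk11
    push_neg at hk11
    have hk12 : 12 ≤ k := by omega
    have hk12' : (12:ℝ) ≤ (k:ℝ) := by exact_mod_cast hk12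
    have h3 : (1:ℝ) ≤ 2 * (k : ℝ) ^ 2 * (2 * Real.log k + Real.log (Real.log k) + 2.5) := by
      nlinarith [inner_ge k hk12]
    have h4 := Nat.le_ceil (2 * (k : ℝ) ^ 2 * (2 * Real.log k + Real.log (Real.log k) + 2.5))
    exact_mod_cast le_trans h3 h4

lemma TPtil_cont (k : ℕ) (ω : ℝ) (h x : ℕ) : Continuous fun α => TPtil k ω h x α := by
  have : (fun α => TPtil k ω h x α)
      = fun α => ∑ n ∈ Finset.Icc ⌈(x : ℝ) / (h : ℝ)⌉₊ x, coefP k ω n * eAdd (α * n) := by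
    funext α; exact TPtil_eq k ω h x α
  rw [this]
  exact continuous_finset_sum _ fun n _ => continuous_const.mul (eAdd_cont n)


/-- Moment bound for `T̃`: if `ξ` is such that the mean-value estimate
`∑_{n≤x} r_{ℙ^k,m}(n)² ≪ x^{2m/k−1}(log x)^ξ` holds for all `m ≥ h₀`, then for
every `ℓ ≥ 2h₀`, `∫₀¹ |T̃(α;x)|^ℓ dα ≪ x^{ℓω−1}(log x)^{ξ+2h₀}`. -/
theorem moment_bound_Ttilde (k h : ℕ) (hk : 1 ≤ k) (hh : hkStar k ≤ h)
    (ω : ℝ) (hω : 1 / (h : ℝ) ≤ ω) (ξ : ℝ)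
    (hmean : ∀ m : ℕ, h0 k ≤ m → ∃ K : ℝ, 0 < K ∧ ∀ x : ℝ, 2 ≤ x →
      ∑ n ∈ Finset.range (⌊x⌋₊ + 1), (repCount (PPow k) m n : ℝ) ^ 2
        ≤ K * x ^ (2 * (m : ℝ) / (k : ℝ) - 1) * Real.log x ^ ξ) :
    ∀ ℓ : ℕ, 2 * h0 k ≤ ℓ → ∃ K : ℝ, 0 < K ∧ ∀ x : ℕ, 2 ≤ x →
      (∫ α in (0:ℝ)..1, ‖TPtil k ω h x α‖ ^ ℓ)
        ≤ K * (x : ℝ) ^ ((ℓ : ℝ) * ω - 1) * Real.log x ^ (ξ + 2 * (h0 k : ℝ)) := by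
  intro ℓ hℓ
  have hh1 : 1 ≤ h := le_trans (one_le_hkStar k hk) hh
  have hh0 : (0:ℝ) < h := by exact_mod_cast hh1
  have hω0 : 0 < ω := lt_of_lt_of_le (by positivity) hω
  set m := h0 k with hm
  have hm1 : 1 ≤ m := one_le_h0 k hk
  obtain ⟨K0, hK0, hmv⟩ := hmean m (le_refl m)
  obtain ⟨K2, hK2, hmom⟩ := even_moment k h hk hh1 ω hω0 ξ m hm1 K0 hK0 hmv
  set C : ℝ := (h : ℝ) * k * Real.log 4 with hC
  have hCpos : 0 < C := by
    have : (0:ℝ) < Real.log 4 := Real.log_pos (by norm_num)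
    have hk0 : (0:ℝ) < k := by exact_mod_cast hk
    positivity
  refine ⟨C ^ (ℓ - 2*m) * K2, by positivity, ?_⟩
  intro x hx
  have hx0 : (0:ℝ) < x := by positivity
  have hsup : ∀ α : ℝ, ‖TPtil k ω h x α‖ ≤ C * (x:ℝ) ^ ω :=
    fun α => sup_bound k h hk hh1 ω hω0 x hx α
  have hCx0 : 0 ≤ C * (x:ℝ) ^ ω := by
    have := Real.rpow_nonneg hx0.le ω
    positivity
  have hkey : ∀ α : ℝ, ‖TPtil k ω h x α‖ ^ ℓ
      ≤ (C * (x:ℝ) ^ ω) ^ (ℓ - 2*m) * ‖TPtil k ω h x α‖ ^ (2*m) := by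
    intro α
    have hsplit : ‖TPtil k ω h x α‖ ^ ℓ
        = ‖TPtil k ω h x α‖ ^ (ℓ - 2*m) * ‖TPtil k ω h x α‖ ^ (2*m) := by
      rw [← pow_add]
      congr 1
      omega
    rw [hsplit]
    exact mul_le_mul_of_nonneg_right
      (pow_le_pow_left₀ (norm_nonneg _) (hsup α) _) (pow_nonneg (norm_nonneg _) _)
  have hcont := TPtil_cont k ω h x
  have hint1 : IntervalIntegrable (fun α => ‖TPtil k ω h x α‖ ^ ℓ) volume 0 1 :=
    ((hcont.norm.pow ℓ)).intervalIntegrable 0 1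
  have hint2 : IntervalIntegrable
      (fun α => (C * (x:ℝ) ^ ω) ^ (ℓ - 2*m) * ‖TPtil k ω h x α‖ ^ (2*m)) volume 0 1 :=
    (continuous_const.mul (hcont.norm.pow (2*m))).intervalIntegrable 0 1
  calc (∫ α in (0:ℝ)..1, ‖TPtil k ω h x α‖ ^ ℓ)
      ≤ ∫ α in (0:ℝ)..1, (C * (x:ℝ) ^ ω) ^ (ℓ - 2*m) * ‖TPtil k ω h x α‖ ^ (2*m) :=
        intervalIntegral.integral_mono_on (by norm_num) hint1 hint2 (fun α _ => hkey α)
    _ = (C * (x:ℝ) ^ ω) ^ (ℓ - 2*m) * ∫ α in (0:ℝ)..1, ‖TPtil k ω h x α‖ ^ (2*m) :=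
        intervalIntegral.integral_const_mul _ _
    _ ≤ (C * (x:ℝ) ^ ω) ^ (ℓ - 2*m)
          * (K2 * (x:ℝ) ^ (2 * (m:ℝ) * ω - 1) * Real.log x ^ (ξ + 2 * (m:ℝ))) :=
        mul_le_mul_of_nonneg_left (hmom x hx) (pow_nonneg hCx0 _)
    _ = C ^ (ℓ - 2*m) * K2 * (x : ℝ) ^ ((ℓ : ℝ) * ω - 1) * Real.log x ^ (ξ + 2 * (m : ℝ)) := by
        rw [mul_pow]
        have hxp : ((x:ℝ) ^ ω) ^ (ℓ - 2*m) * (x:ℝ) ^ (2 * (m:ℝ) * ω - 1)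
            = (x : ℝ) ^ ((ℓ : ℝ) * ω - 1) := by
          rw [← Real.rpow_natCast ((x:ℝ) ^ ω) (ℓ - 2*m), ← Real.rpow_mul hx0.le,
            ← Real.rpow_add hx0]
          congr 1
          rw [Nat.cast_sub hℓ]
          push_cast
          ring
        rw [← hxp]
        ring
end
end
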